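/- arXiv:2404.17694 — 2 statements merged into one kernel-verified Lean document; each statement's English description precedes it below -/
import Mathlib

section
/- Let n be an odd positive integer. Then the limit A_n = lim_{k→∞} ∫₀^π |cosⁿ x − cosⁿ(kx)| dx (k ranging over the positive integers) exists and equals (8/(2^{n−1}·π)) · Σ_{j=0}^{(n−1)/2} C(n,j)/(n−2j)², where C(n,j) denotes the binomial coefficient. -/
open Real Filter MeasureTheory Topology



lemma aux_pow_lip (n : ℕ) (a b : ℝ) (ha : |a| ≤ 1) (hb : |b| ≤ 1) :
    |a ^ n - b ^ n| ≤ n * |a - b| := by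
  induction n with
  | zero => simp
  | succ m ih =>
    have key : a ^ (m + 1) - b ^ (m + 1) = a ^ m * (a - b) + b * (a ^ m - b ^ m) := by ring
    have hpa : |a ^ m| ≤ 1 := by rw [abs_pow]; exact pow_le_one₀ (abs_nonneg a) ha
    have h1 : |a ^ m * (a - b)| ≤ 1 * |a - b| := by
      rw [abs_mul]; exact mul_le_mul_of_nonneg_right hpa (abs_nonneg _)
    have h2 : |b * (a ^ m - b ^ m)| ≤ 1 * (m * |a - b|) := by
      rw [abs_mul]
      exact mul_le_mul hb ih (abs_nonneg _) zero_le_one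
    calc |a ^ (m + 1) - b ^ (m + 1)| ≤ |a ^ m * (a - b)| + |b * (a ^ m - b ^ m)| := by
          rw [key]; exact abs_add_le _ _
      _ ≤ 1 * |a - b| + 1 * (m * |a - b|) := add_le_add h1 h2
      _ = (m + 1 : ℕ) * |a - b| := by push_cast; ring

lemma aux_cos_lip (x y : ℝ) : |Real.cos x - Real.cos y| ≤ |x - y| := by
  rw [Real.cos_sub_cos, abs_mul, abs_mul]
  have h1 : |Real.sin ((x + y) / 2)| ≤ 1 := Real.abs_sin_le_one _
  have h2 : |Real.sin ((x - y) / 2)| ≤ |(x - y) / 2| := Real.abs_sin_le_abs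
  calc |(-2 : ℝ)| * |Real.sin ((x + y) / 2)| * |Real.sin ((x - y) / 2)|
      ≤ |(-2 : ℝ)| * 1 * |(x - y) / 2| := by
        refine mul_le_mul ?_ h2 (abs_nonneg _) (by positivity)
        exact mul_le_mul_of_nonneg_left h1 (abs_nonneg _)
    _ = |x - y| := by
      rw [abs_div]
      rw [abs_of_nonpos (by norm_num : (-2:ℝ) ≤ 0), abs_of_nonneg (by norm_num : (0:ℝ) ≤ 2)]
      ring

lemma aux_f_lip (n : ℕ) (x y : ℝ) :
    |Real.cos x ^ n - Real.cos y ^ n| ≤ n * |x - y| := by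
  calc |Real.cos x ^ n - Real.cos y ^ n| ≤ n * |Real.cos x - Real.cos y| :=
      aux_pow_lip n _ _ (Real.abs_cos_le_one x) (Real.abs_cos_le_one y)
    _ ≤ n * |x - y| := mul_le_mul_of_nonneg_left (aux_cos_lip x y) (Nat.cast_nonneg n)

lemma aux_g_cont (n : ℕ) (c : ℝ) : Continuous (fun t => |c - Real.cos t ^ n|) :=
  (continuous_const.sub (Real.continuous_cos.pow n)).abs

lemma aux_g_intable (n : ℕ) (c : ℝ) (a b : ℝ) :
    IntervalIntegrable (fun t => |c - Real.cos t ^ n|) volume a b :=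
  (aux_g_cont n c).intervalIntegrable a b

lemma aux_g_bd (n : ℕ) (c : ℝ) (hc : |c| ≤ 1) (t : ℝ) : |(|c - Real.cos t ^ n|)| ≤ 2 := by
  rw [abs_abs]
  have h2 : |Real.cos t ^ n| ≤ 1 := by
    rw [abs_pow]; exact pow_le_one₀ (abs_nonneg _) (Real.abs_cos_le_one t)
  calc |c - Real.cos t ^ n| ≤ |c| + |Real.cos t ^ n| := abs_sub _ _
    _ ≤ 2 := by linarith

lemma aux_g_periodic (n : ℕ) (c : ℝ) :
    Function.Periodic (fun t => |c - Real.cos t ^ n|) (2 * π) := by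
  intro t; simp [Real.cos_add_two_pi]

lemma aux_P_bd (n : ℕ) (c : ℝ) (hc : |c| ≤ 1) :
    abs (∫ t in (0:ℝ)..π, |c - Real.cos t ^ n|) ≤ 2 * π := by
  have := intervalIntegral.norm_integral_le_of_norm_le_const
    (C := 2) (f := fun t => |c - Real.cos t ^ n|) (a := 0) (b := π)
    (fun x _ => by rw [Real.norm_eq_abs]; exact aux_g_bd n c hc x)
  rw [Real.norm_eq_abs] at this
  calc abs (∫ t in (0:ℝ)..π, |c - Real.cos t ^ n|) ≤ 2 * |π - 0| := this
    _ = 2 * π := by rw [sub_zero, abs_of_pos Real.pi_pos]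

lemma aux_halfperiod (n : ℕ) (hn : Odd n) (c : ℝ) :
    ∫ t in (0:ℝ)..(2 * π), |c - Real.cos t ^ n|
      = 2 * ∫ t in (0:ℝ)..π, |c - Real.cos t ^ n| := by
  have hsplit : ∫ t in (0:ℝ)..(2 * π), |c - Real.cos t ^ n|
      = (∫ t in (0:ℝ)..π, |c - Real.cos t ^ n|)
        + ∫ t in π..(2 * π), |c - Real.cos t ^ n| := by
    rw [intervalIntegral.integral_add_adjacent_intervals (aux_g_intable n c 0 π)
      (aux_g_intable n c π (2 * π))]
  have h2 : ∫ t in π..(2 * π), |c - Real.cos t ^ n|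
      = ∫ t in (0:ℝ)..π, |c - Real.cos (t + π) ^ n| := by
    rw [intervalIntegral.integral_comp_add_right (fun t => |c - Real.cos t ^ n|) π]
    norm_num [two_mul]
  have h3 : ∀ t : ℝ, |c - Real.cos (t + π) ^ n| = |c + Real.cos t ^ n| := by
    intro t
    rw [Real.cos_add_pi, hn.neg_pow]
    ring_nf
  have h4 : ∫ t in (0:ℝ)..π, |c + Real.cos t ^ n|
      = ∫ t in (0:ℝ)..π, |c + Real.cos (π - t) ^ n| := by
    rw [intervalIntegral.integral_comp_sub_left (fun t => |c + Real.cos t ^ n|) π]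
    norm_num
  have h5 : ∀ t : ℝ, |c + Real.cos (π - t) ^ n| = |c - Real.cos t ^ n| := by
    intro t
    rw [Real.cos_pi_sub, hn.neg_pow]
    ring_nf
  rw [hsplit, h2]
  simp_rw [h3]
  rw [h4]
  simp_rw [h5]
  ring

lemma aux_drift (n : ℕ) (hn : Odd n) (c : ℝ) (hc : |c| ≤ 1) (s t : ℝ) (hst : s ≤ t) :
    abs ((∫ u in s..t, |c - Real.cos u ^ n|)
      - (t - s) / π * ∫ u in (0:ℝ)..π, |c - Real.cos u ^ n|) ≤ 8 * π := by
  set P : ℝ := ∫ u in (0:ℝ)..π, |c - Real.cos u ^ n| with hP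
  have hπ : (0:ℝ) < π := Real.pi_pos
  have hPbd : |P| ≤ 2 * π := aux_P_bd n c hc
  set N : ℤ := ⌊(t - s) / (2 * π)⌋ with hN
  have hN0 : 0 ≤ N := Int.floor_nonneg.mpr (div_nonneg (by linarith) (by positivity))
  have hNle : (N : ℝ) * (2 * π) ≤ t - s := by
    have := Int.floor_le ((t - s) / (2 * π))
    rw [← hN] at this
    calc (N : ℝ) * (2 * π) ≤ (t - s) / (2 * π) * (2 * π) := by
          apply mul_le_mul_of_nonneg_right this (by positivity)
      _ = t - s := by field_simp
  have hNlt : t - s < ((N : ℝ) + 1) * (2 * π) := by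
    have := Int.lt_floor_add_one ((t - s) / (2 * π))
    rw [← hN] at this
    calc t - s = (t - s) / (2 * π) * (2 * π) := by field_simp
      _ < ((N : ℝ) + 1) * (2 * π) := by
          apply mul_lt_mul_of_pos_right (by push_cast at this ⊢; linarith) (by positivity)
  have hsplit : (∫ u in s..t, |c - Real.cos u ^ n|)
      = (∫ u in s..(s + N • (2 * π)), |c - Real.cos u ^ n|)
        + ∫ u in (s + N • (2 * π))..t, |c - Real.cos u ^ n| :=
    (intervalIntegral.integral_add_adjacent_intervals (aux_g_intable n c _ _)
      (aux_g_intable n c _ _)).symm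
  have hI1 : (∫ u in s..(s + N • (2 * π)), |c - Real.cos u ^ n|) = (N : ℝ) * (2 * P) := by
    rw [(aux_g_periodic n c).intervalIntegral_add_zsmul_eq N s (aux_g_intable n c)]
    rw [(aux_g_periodic n c).intervalIntegral_add_eq s 0, zero_add, aux_halfperiod n hn c]
    rw [zsmul_eq_mul]
  have hδ1 : 0 ≤ t - (s + (N : ℝ) * (2 * π)) := by linarith
  have hδ2 : t - (s + (N : ℝ) * (2 * π)) ≤ 2 * π := by push_cast at hNlt ⊢; nlinarith
  have hR : abs (∫ u in (s + N • (2 * π))..t, |c - Real.cos u ^ n|) ≤ 4 * π := by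
    have hb := intervalIntegral.norm_integral_le_of_norm_le_const
      (C := 2) (f := fun u => |c - Real.cos u ^ n|) (a := s + N • (2 * π)) (b := t)
      (fun x _ => by rw [Real.norm_eq_abs]; exact aux_g_bd n c hc x)
    rw [Real.norm_eq_abs] at hb
    have : |t - (s + N • (2 * π))| ≤ 2 * π := by
      rw [zsmul_eq_mul, abs_of_nonneg hδ1]; exact hδ2
    calc abs (∫ u in (s + N • (2 * π))..t, |c - Real.cos u ^ n|) ≤ 2 * |t - (s + N • (2 * π))| := hb
      _ ≤ 2 * (2 * π) := by linarith
      _ = 4 * π := by ring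
  have hABsplit : (t - s) / π * P = (N : ℝ) * (2 * P) + (t - s - (N : ℝ) * (2 * π)) / π * P := by
    field_simp
    ring
  have hδP : abs ((t - s - (N : ℝ) * (2 * π)) / π * P) ≤ 4 * π := by
    rw [abs_mul, abs_div, abs_of_pos hπ]
    have h1 : abs (t - s - (N : ℝ) * (2 * π)) ≤ 2 * π := by
      rw [abs_of_nonneg (by linarith)]; linarith
    have hq : abs (t - s - (N : ℝ) * (2 * π)) / π ≤ (2 * π) / π := by gcongr
    calc abs (t - s - (N : ℝ) * (2 * π)) / π * |P| ≤ (2 * π) / π * (2 * π) :=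
          mul_le_mul hq hPbd (abs_nonneg _) (by positivity)
      _ = 4 * π := by field_simp; ring
  rw [hsplit, hI1, hABsplit]
  have expand : (N:ℝ) * (2 * P) + (∫ u in (s + N • (2 * π))..t, |c - Real.cos u ^ n|)
      - ((N:ℝ) * (2 * P) + (t - s - (N : ℝ) * (2 * π)) / π * P)
      = (∫ u in (s + N • (2 * π))..t, |c - Real.cos u ^ n|)
        - (t - s - (N : ℝ) * (2 * π)) / π * P := by ring
  rw [expand]
  calc abs ((∫ u in (s + N • (2 * π))..t, |c - Real.cos u ^ n|)
        - (t - s - (N : ℝ) * (2 * π)) / π * P)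
      ≤ abs (∫ u in (s + N • (2 * π))..t, |c - Real.cos u ^ n|)
        + abs ((t - s - (N : ℝ) * (2 * π)) / π * P) := abs_sub _ _
    _ ≤ 4 * π + 4 * π := add_le_add hR hδP
    _ = 8 * π := by ring

lemma aux_block (n : ℕ) (hn : Odd n) (c : ℝ) (hc : |c| ≤ 1) (k : ℕ) (hk : 1 ≤ k)
    (a b : ℝ) (hab : a ≤ b) :
    abs ((∫ x in a..b, |c - Real.cos ((k : ℝ) * x) ^ n|)
      - (b - a) / π * ∫ u in (0:ℝ)..π, |c - Real.cos u ^ n|) ≤ 8 * π / k := by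
  have hk0 : (0:ℝ) < k := by exact_mod_cast hk
  set P : ℝ := ∫ u in (0:ℝ)..π, |c - Real.cos u ^ n| with hP
  have hcomp : (∫ x in a..b, |c - Real.cos ((k : ℝ) * x) ^ n|)
      = (k : ℝ)⁻¹ * ∫ u in ((k : ℝ) * a)..((k : ℝ) * b), |c - Real.cos u ^ n| := by
    rw [intervalIntegral.integral_comp_mul_left (fun u => |c - Real.cos u ^ n|) (ne_of_gt hk0)]
    simp [smul_eq_mul]
  have hBA : (b - a) / π * P = (k : ℝ)⁻¹ * (((k : ℝ) * b - (k : ℝ) * a) / π * P) := by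
    field_simp
  rw [hcomp, hBA, ← mul_sub, abs_mul, abs_inv, abs_of_pos hk0]
  have hdrift := aux_drift n hn c hc ((k : ℝ) * a) ((k : ℝ) * b)
    (by nlinarith)
  calc (k : ℝ)⁻¹ * abs ((∫ u in ((k : ℝ) * a)..((k : ℝ) * b), |c - Real.cos u ^ n|)
        - ((k : ℝ) * b - (k : ℝ) * a) / π * P)
      ≤ (k : ℝ)⁻¹ * (8 * π) := by
        apply mul_le_mul_of_nonneg_left hdrift (by positivity)
    _ = 8 * π / k := by field_simp

lemma aux_P_lip (n : ℕ) (a b : ℝ) :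
    abs ((∫ t in (0:ℝ)..π, |a - Real.cos t ^ n|) - ∫ t in (0:ℝ)..π, |b - Real.cos t ^ n|)
      ≤ π * |a - b| := by
  have hsub : (∫ t in (0:ℝ)..π, |a - Real.cos t ^ n|) - (∫ t in (0:ℝ)..π, |b - Real.cos t ^ n|)
      = ∫ t in (0:ℝ)..π, (|a - Real.cos t ^ n| - |b - Real.cos t ^ n|) :=
    (intervalIntegral.integral_sub (aux_g_intable n a 0 π) (aux_g_intable n b 0 π)).symm
  rw [hsub]
  have hb := intervalIntegral.norm_integral_le_of_norm_le_const (C := |a - b|)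
    (f := fun t => |a - Real.cos t ^ n| - |b - Real.cos t ^ n|) (a := 0) (b := π)
    (fun x _ => by
      rw [Real.norm_eq_abs]
      have := abs_sub_abs_le_abs_sub (a - Real.cos x ^ n) (b - Real.cos x ^ n)
      have h2 := abs_sub_abs_le_abs_sub (b - Real.cos x ^ n) (a - Real.cos x ^ n)
      rw [show a - Real.cos x ^ n - (b - Real.cos x ^ n) = a - b by ring] at this
      rw [show b - Real.cos x ^ n - (a - Real.cos x ^ n) = -(a - b) by ring, abs_neg] at h2
      rw [abs_sub_le_iff]; constructor <;> linarith)
  rw [Real.norm_eq_abs] at hb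
  calc abs (∫ t in (0:ℝ)..π, (|a - Real.cos t ^ n| - |b - Real.cos t ^ n|))
      ≤ |a - b| * |π - 0| := hb
    _ = π * |a - b| := by rw [sub_zero, abs_of_pos Real.pi_pos]; ring

/-- `G` is Lipschitz, hence continuous/integrable. -/
lemma aux_G_lip (n : ℕ) (x y : ℝ) :
    abs ((∫ t in (0:ℝ)..π, |Real.cos x ^ n - Real.cos t ^ n|)
      - ∫ t in (0:ℝ)..π, |Real.cos y ^ n - Real.cos t ^ n|) ≤ π * n * |x - y| := by
  calc abs ((∫ t in (0:ℝ)..π, |Real.cos x ^ n - Real.cos t ^ n|)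
      - ∫ t in (0:ℝ)..π, |Real.cos y ^ n - Real.cos t ^ n|)
      ≤ π * |Real.cos x ^ n - Real.cos y ^ n| := aux_P_lip n _ _
    _ ≤ π * (n * |x - y|) := mul_le_mul_of_nonneg_left (aux_f_lip n x y) (le_of_lt Real.pi_pos)
    _ = π * n * |x - y| := by ring

lemma aux_G_cont (n : ℕ) :
    Continuous (fun x => ∫ t in (0:ℝ)..π, |Real.cos x ^ n - Real.cos t ^ n|) := by
  have : LipschitzWith (Real.toNNReal (π * n)) (fun x => ∫ t in (0:ℝ)..π, |Real.cos x ^ n - Real.cos t ^ n|) := by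
    apply LipschitzWith.of_dist_le_mul
    intro x y
    rw [Real.dist_eq, Real.dist_eq, Real.coe_toNNReal _ (by positivity)]
    exact aux_G_lip n x y
  exact this.continuous

lemma aux_f_bd (n : ℕ) (x : ℝ) : |Real.cos x ^ n| ≤ 1 := by
  rw [abs_pow]; exact pow_le_one₀ (abs_nonneg _) (Real.abs_cos_le_one x)

lemma aux_main_est (n : ℕ) (hn : Odd n) (m k : ℕ) (hm : 1 ≤ m) (hk : 1 ≤ k) :
    abs ((∫ x in (0:ℝ)..π, |Real.cos x ^ n - Real.cos ((k : ℝ) * x) ^ n|)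
      - (1 / π) * ∫ x in (0:ℝ)..π, (∫ t in (0:ℝ)..π, |Real.cos x ^ n - Real.cos t ^ n|))
      ≤ 2 * n * π ^ 2 / m + 8 * π * m / k := by
  have hπ : (0:ℝ) < π := Real.pi_pos
  have hm0 : (0:ℝ) < m := by exact_mod_cast hm
  have hk0 : (0:ℝ) < k := by exact_mod_cast hk
  set G : ℝ → ℝ := fun x => ∫ t in (0:ℝ)..π, |Real.cos x ^ n - Real.cos t ^ n| with hG
  set a : ℕ → ℝ := fun j => j * (π / m) with ha
  have ha0 : a 0 = 0 := by simp [ha]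
  have ham : a m = π := by simp only [ha]; field_simp
  have hstep : ∀ j : ℕ, a (j + 1) - a j = π / m := by
    intro j; simp only [ha]; push_cast; ring
  have hmono : ∀ j : ℕ, a j ≤ a (j + 1) := by
    intro j; have := hstep j; have : (0:ℝ) < π / m := by positivity
    simp only [ha]; push_cast
    have : (j : ℝ) ≤ j + 1 := by linarith
    nlinarith [div_pos hπ hm0]
  have hcont1 : Continuous (fun x => |Real.cos x ^ n - Real.cos ((k : ℝ) * x) ^ n|) :=
    (((Real.continuous_cos).pow n).sub
      ((Real.continuous_cos.comp (continuous_const.mul continuous_id)).pow n)).abs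
  have hint1 : ∀ (u v : ℝ), IntervalIntegrable
      (fun x => |Real.cos x ^ n - Real.cos ((k : ℝ) * x) ^ n|) volume u v :=
    fun u v => hcont1.intervalIntegrable u v
  have hintG : ∀ (u v : ℝ), IntervalIntegrable G volume u v :=
    fun u v => (aux_G_cont n).intervalIntegrable u v
  have hsum1 : (∫ x in (0:ℝ)..π, |Real.cos x ^ n - Real.cos ((k : ℝ) * x) ^ n|)
      = ∑ j ∈ Finset.range m, ∫ x in (a j)..(a (j + 1)),
          |Real.cos x ^ n - Real.cos ((k : ℝ) * x) ^ n| := by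
    rw [intervalIntegral.sum_integral_adjacent_intervals (fun j _ => hint1 _ _), ha0, ham]
  have hsum2 : (∫ x in (0:ℝ)..π, G x)
      = ∑ j ∈ Finset.range m, ∫ x in (a j)..(a (j + 1)), G x := by
    rw [intervalIntegral.sum_integral_adjacent_intervals (fun j _ => hintG _ _), ha0, ham]
  have key : ∀ j ∈ Finset.range m,
      abs ((∫ x in (a j)..(a (j + 1)), |Real.cos x ^ n - Real.cos ((k : ℝ) * x) ^ n|)
        - (1 / π) * ∫ x in (a j)..(a (j + 1)), G x)
      ≤ 2 * n * π ^ 2 / m ^ 2 + 8 * π / k := by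
    intro j _
    set c : ℝ := Real.cos (a j) ^ n with hc
    have hc1 : |c| ≤ 1 := aux_f_bd n (a j)
    set B : ℝ := ∫ x in (a j)..(a (j + 1)), |c - Real.cos ((k : ℝ) * x) ^ n| with hB
    -- e1
    have hcont2 : Continuous (fun x : ℝ => |c - Real.cos ((k : ℝ) * x) ^ n|) :=
      (continuous_const.sub
        ((Real.continuous_cos.comp (continuous_const.mul continuous_id)).pow n)).abs
    have e1 : abs ((∫ x in (a j)..(a (j + 1)), |Real.cos x ^ n - Real.cos ((k : ℝ) * x) ^ n|)
        - B) ≤ (n * (π / m)) * (π / m) := by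
      have hsub : (∫ x in (a j)..(a (j + 1)), |Real.cos x ^ n - Real.cos ((k : ℝ) * x) ^ n|) - B
          = ∫ x in (a j)..(a (j + 1)),
              (|Real.cos x ^ n - Real.cos ((k : ℝ) * x) ^ n| - |c - Real.cos ((k : ℝ) * x) ^ n|) :=
        (intervalIntegral.integral_sub (hint1 _ _) (hcont2.intervalIntegrable _ _)).symm
      rw [hsub]
      have hb := intervalIntegral.norm_integral_le_of_norm_le_const (C := n * (π / m))
        (f := fun x => |Real.cos x ^ n - Real.cos ((k : ℝ) * x) ^ n|
          - |c - Real.cos ((k : ℝ) * x) ^ n|) (a := a j) (b := a (j + 1))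
        (fun x hx => by
          rw [Real.norm_eq_abs]
          have h1 : abs (|Real.cos x ^ n - Real.cos ((k : ℝ) * x) ^ n|
              - |c - Real.cos ((k : ℝ) * x) ^ n|) ≤ |Real.cos x ^ n - c| := by
            have := abs_abs_sub_abs_le_abs_sub (Real.cos x ^ n - Real.cos ((k : ℝ) * x) ^ n)
              (c - Real.cos ((k : ℝ) * x) ^ n)
            simpa using this
          have h2 : |Real.cos x ^ n - c| ≤ n * |x - a j| := aux_f_lip n x (a j)
          have h3 : |x - a j| ≤ π / m := by
            rw [Set.uIoc_of_le (hmono j)] at hx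
            obtain ⟨hx1, hx2⟩ := hx
            rw [abs_of_nonneg (by linarith)]
            have := hstep j; linarith
          calc abs (|Real.cos x ^ n - Real.cos ((k : ℝ) * x) ^ n|
              - |c - Real.cos ((k : ℝ) * x) ^ n|) ≤ n * |x - a j| := le_trans h1 h2
            _ ≤ n * (π / m) := mul_le_mul_of_nonneg_left h3 (Nat.cast_nonneg n))
      rw [Real.norm_eq_abs] at hb
      calc abs (∫ x in (a j)..(a (j+1)), (|Real.cos x ^ n - Real.cos ((k : ℝ) * x) ^ n|
            - |c - Real.cos ((k : ℝ) * x) ^ n|)) ≤ n * (π / m) * |a (j+1) - a j| := hb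
        _ = n * (π / m) * (π / m) := by rw [hstep j, abs_of_pos (by positivity)]
    -- e2
    have e2 : abs (B - (a (j + 1) - a j) / π * G (a j)) ≤ 8 * π / k := by
      have : G (a j) = ∫ u in (0:ℝ)..π, |c - Real.cos u ^ n| := by rw [hG]
      rw [this]
      exact aux_block n hn c hc1 k hk (a j) (a (j + 1)) (hmono j)
    -- e3
    have e3 : abs ((a (j + 1) - a j) / π * G (a j)
        - (1 / π) * ∫ x in (a j)..(a (j + 1)), G x) ≤ n * π ^ 2 / m ^ 2 := by
      have hconst : (a (j + 1) - a j) / π * G (a j)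
          = (1 / π) * ∫ _x in (a j)..(a (j + 1)), G (a j) := by
        rw [intervalIntegral.integral_const, smul_eq_mul]
        field_simp
      rw [hconst, ← mul_sub, abs_mul, abs_of_pos (by positivity : (0:ℝ) < 1 / π)]
      have hsub : (∫ _x in (a j)..(a (j + 1)), G (a j)) - (∫ x in (a j)..(a (j + 1)), G x)
          = ∫ x in (a j)..(a (j + 1)), (G (a j) - G x) :=
        (intervalIntegral.integral_sub (intervalIntegrable_const) (hintG _ _)).symm
      rw [hsub]
      have hb := intervalIntegral.norm_integral_le_of_norm_le_const (C := π * n * (π / m))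
        (f := fun x => G (a j) - G x) (a := a j) (b := a (j + 1))
        (fun x hx => by
          rw [Real.norm_eq_abs]
          have h1 : abs (G (a j) - G x) ≤ π * n * |a j - x| := aux_G_lip n (a j) x
          have h3 : |a j - x| ≤ π / m := by
            rw [Set.uIoc_of_le (hmono j)] at hx
            obtain ⟨hx1, hx2⟩ := hx
            rw [abs_sub_comm, abs_of_nonneg (by linarith)]
            have := hstep j; linarith
          calc abs (G (a j) - G x) ≤ π * n * |a j - x| := h1
            _ ≤ π * n * (π / m) := mul_le_mul_of_nonneg_left h3 (by positivity))
      rw [Real.norm_eq_abs] at hb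
      calc (1 / π) * abs (∫ x in (a j)..(a (j+1)), (G (a j) - G x))
          ≤ (1 / π) * (π * n * (π / m) * |a (j+1) - a j|) :=
            mul_le_mul_of_nonneg_left hb (by positivity)
        _ = (1 / π) * (π * n * (π / m) * (π / m)) := by
            rw [hstep j, abs_of_pos (by positivity)]
        _ = n * π ^ 2 / m ^ 2 := by field_simp
    calc abs ((∫ x in (a j)..(a (j + 1)), |Real.cos x ^ n - Real.cos ((k : ℝ) * x) ^ n|)
        - (1 / π) * ∫ x in (a j)..(a (j + 1)), G x)
        ≤ abs ((∫ x in (a j)..(a (j + 1)), |Real.cos x ^ n - Real.cos ((k : ℝ) * x) ^ n|) - B)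
          + abs (B - (a (j + 1) - a j) / π * G (a j))
          + abs ((a (j + 1) - a j) / π * G (a j)
            - (1 / π) * ∫ x in (a j)..(a (j + 1)), G x) := by
          have := abs_sub_le
            ((∫ x in (a j)..(a (j + 1)), |Real.cos x ^ n - Real.cos ((k : ℝ) * x) ^ n|)) B
            ((1 / π) * ∫ x in (a j)..(a (j + 1)), G x)
          have h4 := abs_sub_le B ((a (j + 1) - a j) / π * G (a j))
            ((1 / π) * ∫ x in (a j)..(a (j + 1)), G x)
          linarith
      _ ≤ (n * (π / m)) * (π / m) + 8 * π / k + n * π ^ 2 / m ^ 2 := by linarith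
      _ = 2 * n * π ^ 2 / m ^ 2 + 8 * π / k := by field_simp; ring
  -- combine
  rw [hsum1, hsum2, Finset.mul_sum, ← Finset.sum_sub_distrib]
  calc abs (∑ j ∈ Finset.range m,
        ((∫ x in (a j)..(a (j + 1)), |Real.cos x ^ n - Real.cos ((k : ℝ) * x) ^ n|)
          - (1 / π) * ∫ x in (a j)..(a (j + 1)), G x))
      ≤ ∑ j ∈ Finset.range m,
        abs ((∫ x in (a j)..(a (j + 1)), |Real.cos x ^ n - Real.cos ((k : ℝ) * x) ^ n|)
          - (1 / π) * ∫ x in (a j)..(a (j + 1)), G x) := Finset.abs_sum_le_sum_abs _ _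
    _ ≤ ∑ _j ∈ Finset.range m, (2 * n * π ^ 2 / m ^ 2 + 8 * π / k) :=
        Finset.sum_le_sum key
    _ = m * (2 * n * π ^ 2 / m ^ 2 + 8 * π / k) := by
        rw [Finset.sum_const, Finset.card_range]; rw [nsmul_eq_mul]
    _ = 2 * n * π ^ 2 / m + 8 * π * m / k := by field_simp

lemma aux_tendsto (n : ℕ) (hn : Odd n) :
    Tendsto (fun k : ℕ => ∫ x in (0:ℝ)..π, |Real.cos x ^ n - Real.cos ((k : ℝ) * x) ^ n|) atTop
      (𝓝 ((1 / π) * ∫ x in (0:ℝ)..π,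
        (∫ t in (0:ℝ)..π, |Real.cos x ^ n - Real.cos t ^ n|))) := by
  have hπ : (0:ℝ) < π := Real.pi_pos
  rw [Metric.tendsto_atTop]
  intro ε hε
  set m : ℕ := ⌈8 * n * π ^ 2 / ε⌉₊ + 1 with hm
  have hm1 : 1 ≤ m := Nat.le_add_left 1 _
  have hm0 : (0:ℝ) < m := by exact_mod_cast hm1
  have hmge : 8 * n * π ^ 2 / ε ≤ (m : ℝ) := by
    calc 8 * n * π ^ 2 / ε ≤ (⌈8 * n * π ^ 2 / ε⌉₊ : ℝ) := Nat.le_ceil _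
      _ ≤ (m : ℝ) := by rw [hm]; push_cast; linarith
  have hmbd : 2 * n * π ^ 2 / m ≤ ε / 4 := by
    rw [div_le_iff₀ hm0]
    have : ε / 4 * (8 * n * π ^ 2 / ε) = 2 * n * π ^ 2 := by field_simp; ring
    nlinarith [mul_le_mul_of_nonneg_left hmge (by linarith : (0:ℝ) ≤ ε / 4)]
  refine ⟨⌈32 * π * m / ε⌉₊ + 1, fun k hk => ?_⟩
  have hk1 : 1 ≤ k := le_trans (Nat.le_add_left 1 _) hk
  have hk0 : (0:ℝ) < k := by exact_mod_cast hk1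
  have hkge : 32 * π * m / ε ≤ (k : ℝ) := by
    calc 32 * π * m / ε ≤ (⌈32 * π * m / ε⌉₊ : ℝ) := Nat.le_ceil _
      _ ≤ (k : ℝ) := by exact_mod_cast le_trans (Nat.le_succ _) hk
  have hkbd : 8 * π * m / k ≤ ε / 4 := by
    rw [div_le_iff₀ hk0]
    have : ε / 4 * (32 * π * m / ε) = 8 * π * m := by field_simp; ring
    nlinarith [mul_le_mul_of_nonneg_left hkge (by linarith : (0:ℝ) ≤ ε / 4)]
  rw [Real.dist_eq]
  have hest := aux_main_est n hn m k hm1 hk1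
  calc abs ((∫ x in (0:ℝ)..π, |Real.cos x ^ n - Real.cos ((k : ℝ) * x) ^ n|)
      - (1 / π) * ∫ x in (0:ℝ)..π, (∫ t in (0:ℝ)..π, |Real.cos x ^ n - Real.cos t ^ n|))
      ≤ 2 * n * π ^ 2 / m + 8 * π * m / k := hest
    _ ≤ ε / 4 + ε / 4 := add_le_add hmbd hkbd
    _ < ε := by linarith


lemma aux_hd_lin (M x : ℝ) : HasDerivAt (fun y : ℝ => M * y) M x := by
  simpa using (hasDerivAt_id x).const_mul M

lemma aux_hd_sin (M : ℝ) (hM : M ≠ 0) (x : ℝ) :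
    HasDerivAt (fun y => Real.sin (M * y) / M) (Real.cos (M * x)) x := by
  have h := ((Real.hasDerivAt_sin (M * x)).comp x (aux_hd_lin M x)).div_const M
  refine h.congr_deriv ?_
  field_simp

lemma aux_hd_cos (M : ℝ) (hM : M ≠ 0) (x : ℝ) :
    HasDerivAt (fun y => -Real.cos (M * y) / M ^ 2) (Real.sin (M * x) / M) x := by
  have h := (((Real.hasDerivAt_cos (M * x)).comp x (aux_hd_lin M x)).neg).div_const (M ^ 2)
  refine h.congr_deriv ?_
  field_simp

lemma aux_hd_mix (M : ℝ) (hM : M ≠ 0) (x : ℝ) :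
    HasDerivAt (fun y => (π - 2 * y) * Real.sin (M * y) / M - 2 * Real.cos (M * y) / M ^ 2)
      ((π - 2 * x) * Real.cos (M * x)) x := by
  have h1 : HasDerivAt (fun y : ℝ => (π - 2 * y)) (-2) x := by
    simpa using ((hasDerivAt_id x).const_mul (2:ℝ)).const_sub π
  have h2 := (Real.hasDerivAt_sin (M * x)).comp x (aux_hd_lin M x)
  have h3 := ((h1.mul h2).div_const M)
  have h4 := (((Real.hasDerivAt_cos (M * x)).comp x (aux_hd_lin M x)).const_mul 2).div_const (M ^ 2)
  have h := h3.sub h4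
  refine h.congr_deriv ?_
  simp only [Function.comp_apply]
  field_simp
  ring


lemma aux_cos_expand (n : ℕ) (x : ℝ) :
    (2 * Real.cos x) ^ n = ∑ j ∈ Finset.range (n + 1),
      (n.choose j : ℝ) * Real.cos (((n : ℝ) - 2 * j) * x) := by
  have key : ((2 : ℂ) * Complex.cos x) ^ n = ∑ j ∈ Finset.range (n + 1),
      (n.choose j : ℂ) * Complex.exp ((((j : ℝ) * 2 - n) * x : ℝ) * Complex.I) := by
    have hcos : (2 : ℂ) * Complex.cos x
        = Complex.exp (x * Complex.I) + Complex.exp (-x * Complex.I) := by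
      rw [Complex.cos]; ring
    rw [hcos, add_pow]
    refine Finset.sum_congr rfl fun j hj => ?_
    have hj' : j ≤ n := Nat.lt_succ_iff.mp (Finset.mem_range.mp hj)
    rw [← Complex.exp_nat_mul, ← Complex.exp_nat_mul, ← Complex.exp_add]
    have : (j : ℂ) * (↑x * Complex.I) + (n - j : ℕ) * (-↑x * Complex.I)
        = ((((j : ℝ) * 2 - n) * x : ℝ) : ℂ) * Complex.I := by
      have : ((n - j : ℕ) : ℂ) = (n : ℂ) - j := by
        push_cast [Nat.cast_sub hj']; ring
      rw [this]; push_cast; ring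
    rw [this]; ring
  have h2 := congrArg Complex.re key
  rw [Complex.re_sum] at h2
  have hL : ((2 : ℂ) * Complex.cos ↑x) ^ n = (((2 * Real.cos x) ^ n : ℝ) : ℂ) := by
    rw [← Complex.ofReal_cos]; push_cast; ring
  rw [hL, Complex.ofReal_re] at h2
  rw [h2]
  refine Finset.sum_congr rfl fun j hj => ?_
  rw [Complex.mul_re]
  simp only [Complex.natCast_re, Complex.natCast_im, Complex.exp_ofReal_mul_I_re,
    zero_mul, sub_zero]
  rw [show ((j : ℝ) * 2 - n) * x = -(((n : ℝ) - 2 * j) * x) by ring, Real.cos_neg]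

lemma aux_cos_pow_eq (n : ℕ) (hn : Odd n) (x : ℝ) :
    Real.cos x ^ n = ∑ j ∈ Finset.range ((n - 1) / 2 + 1),
      (n.choose j : ℝ) / 2 ^ (n - 1) * Real.cos (((n : ℝ) - 2 * j) * x) := by
  obtain ⟨r, hr⟩ := hn
  subst hr
  have hr2 : (2 * r + 1 - 1) / 2 = r := by omega
  have hr3 : 2 * r + 1 - 1 = 2 * r := by omega
  rw [hr2, hr3]
  set h : ℕ → ℝ := fun j => ((2 * r + 1).choose j : ℝ)
      * Real.cos ((((2 * r + 1 : ℕ) : ℝ) - 2 * j) * x) with hh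
  have expand := aux_cos_expand (2 * r + 1) x
  have hsplit : ∑ j ∈ Finset.range (2 * r + 1 + 1), h j
      = ∑ j ∈ Finset.range (r + 1), h j + ∑ j ∈ Finset.range (r + 1), h (r + 1 + j) := by
    have h1 : ∑ j ∈ Finset.range (2 * r + 1 + 1), h j = ∑ j ∈ Finset.range (r + 1), h j
        + ∑ i ∈ Finset.Ico (r + 1) (2 * r + 1 + 1), h i := by
      rw [Finset.range_eq_Ico,
        ← Finset.sum_Ico_consecutive _ (by omega : 0 ≤ r + 1) (by omega : r + 1 ≤ 2 * r + 1 + 1),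
        ← Finset.range_eq_Ico]
    rw [h1]
    congr 1
    rw [Finset.sum_Ico_eq_sum_range, show 2 * r + 1 + 1 - (r + 1) = r + 1 by omega]
  have hrefl : ∀ j ∈ Finset.range (r + 1), h (r + 1 + j) = h (r + 1 - 1 - j) := by
    intro j hj
    have hjr : j ≤ r := Nat.lt_succ_iff.mp (Finset.mem_range.mp hj)
    have e1 : (2 * r + 1).choose (r + 1 + j) = (2 * r + 1).choose (r - j) := by
      rw [← Nat.choose_symm (by omega : r + 1 + j ≤ 2 * r + 1)]
      congr 1; omega
    have e3 : (((2 * r + 1 : ℕ) : ℝ) - 2 * ((r + 1 + j : ℕ) : ℝ))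
        = -((((2 * r + 1 : ℕ) : ℝ) - 2 * ((r - j : ℕ) : ℝ))) := by
      rw [Nat.cast_sub hjr]; push_cast; ring
    simp only [hh]
    rw [show (r + 1 - 1 - j) = r - j from by omega, e1, e3, neg_mul, Real.cos_neg]
  have hsum2 : ∑ j ∈ Finset.range (r + 1), h (r + 1 + j) = ∑ j ∈ Finset.range (r + 1), h j := by
    rw [Finset.sum_congr rfl hrefl, Finset.sum_range_reflect]
  rw [hsplit, hsum2] at expand
  rw [mul_pow] at expand
  have hpow : (2 : ℝ) ^ (2 * r + 1) = 2 * 2 ^ (2 * r) := by rw [pow_succ]; ring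
  have h2pos : (0:ℝ) < 2 ^ (2 * r) := by positivity
  have key2 : (2:ℝ) ^ (2 * r) * Real.cos x ^ (2 * r + 1) = ∑ j ∈ Finset.range (r + 1), h j := by
    rw [hpow] at expand; linarith
  have goal2 : Real.cos x ^ (2 * r + 1)
      = ∑ j ∈ Finset.range (r + 1), h j / 2 ^ (2 * r) := by
    rw [← Finset.sum_div, eq_div_iff (ne_of_gt h2pos)]
    linarith
  rw [goal2]
  refine Finset.sum_congr rfl fun j hj => ?_
  simp only [hh]; ring

lemma aux_M_facts (n j : ℕ) (hn : Odd n) (hj : j < (n - 1) / 2 + 1) :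
    0 < n - 2 * j ∧ Odd (n - 2 * j) ∧ ((n - 2 * j : ℕ) : ℝ) = (n : ℝ) - 2 * j := by
  have h1 : n % 2 = 1 := Nat.odd_iff.mp hn
  have h2 : 2 * j ≤ n - 1 := by omega
  refine ⟨by omega, Nat.odd_iff.mpr (by omega), ?_⟩
  rw [Nat.cast_sub (by omega)]
  push_cast; ring

lemma aux_S_hasDeriv (n : ℕ) (hn : Odd n) (x : ℝ) :
    HasDerivAt (fun y => ∑ j ∈ Finset.range ((n - 1) / 2 + 1),
      (n.choose j : ℝ) / 2 ^ (n - 1) * (Real.sin (((n - 2 * j : ℕ) : ℝ) * y) / ((n - 2 * j : ℕ) : ℝ)))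
      (Real.cos x ^ n) x := by
  have key : HasDerivAt (fun y => ∑ j ∈ Finset.range ((n - 1) / 2 + 1),
      (n.choose j : ℝ) / 2 ^ (n - 1) * (Real.sin (((n - 2 * j : ℕ) : ℝ) * y) / ((n - 2 * j : ℕ) : ℝ)))
      (∑ j ∈ Finset.range ((n - 1) / 2 + 1),
        (n.choose j : ℝ) / 2 ^ (n - 1) * Real.cos (((n - 2 * j : ℕ) : ℝ) * x)) x := by
    apply HasDerivAt.fun_sum
    intro j hj
    have hM : ((n - 2 * j : ℕ) : ℝ) ≠ 0 := by
      have := (aux_M_facts n j hn (Finset.mem_range.mp hj)).1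
      positivity
    exact (aux_hd_sin _ hM x).const_mul _
  convert key using 1
  rw [aux_cos_pow_eq n hn x]
  refine Finset.sum_congr rfl fun j hj => ?_
  rw [(aux_M_facts n j hn (Finset.mem_range.mp hj)).2.2]

lemma aux_int_f (n : ℕ) (hn : Odd n) (a b : ℝ) :
    (∫ t in a..b, Real.cos t ^ n)
      = (∑ j ∈ Finset.range ((n - 1) / 2 + 1),
          (n.choose j : ℝ) / 2 ^ (n - 1) * (Real.sin (((n - 2 * j : ℕ) : ℝ) * b) / ((n - 2 * j : ℕ) : ℝ)))
        - ∑ j ∈ Finset.range ((n - 1) / 2 + 1),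
          (n.choose j : ℝ) / 2 ^ (n - 1) * (Real.sin (((n - 2 * j : ℕ) : ℝ) * a) / ((n - 2 * j : ℕ) : ℝ)) :=
  intervalIntegral.integral_eq_sub_of_hasDerivAt (fun t _ => aux_S_hasDeriv n hn t)
    ((Real.continuous_cos.pow n).intervalIntegrable a b)

lemma aux_G_closed (n : ℕ) (hn : Odd n) (x : ℝ) (hx : x ∈ Set.Icc (0:ℝ) π) :
    (∫ t in (0:ℝ)..π, |Real.cos x ^ n - Real.cos t ^ n|)
      = 2 * (∑ j ∈ Finset.range ((n - 1) / 2 + 1),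
          (n.choose j : ℝ) / 2 ^ (n - 1) * (Real.sin (((n - 2 * j : ℕ) : ℝ) * x) / ((n - 2 * j : ℕ) : ℝ)))
        + (π - 2 * x) * Real.cos x ^ n := by
  obtain ⟨hx0, hxπ⟩ := hx
  have hfc : Continuous (fun t : ℝ => Real.cos t ^ n) := Real.continuous_cos.pow n
  have hintf : ∀ u v : ℝ, IntervalIntegrable (fun t => Real.cos t ^ n) volume u v :=
    fun u v => hfc.intervalIntegrable u v
  have hintg : ∀ u v : ℝ, IntervalIntegrable
      (fun t => |Real.cos x ^ n - Real.cos t ^ n|) volume u v :=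
    fun u v => ((continuous_const.sub (hfc)).abs).intervalIntegrable u v
  have hsplit : (∫ t in (0:ℝ)..π, |Real.cos x ^ n - Real.cos t ^ n|)
      = (∫ t in (0:ℝ)..x, |Real.cos x ^ n - Real.cos t ^ n|)
        + ∫ t in x..π, |Real.cos x ^ n - Real.cos t ^ n| :=
    (intervalIntegral.integral_add_adjacent_intervals (hintg 0 x) (hintg x π)).symm
  have hmono := (Odd.strictMono_pow (R := ℝ) hn).monotone
  have h1 : (∫ t in (0:ℝ)..x, |Real.cos x ^ n - Real.cos t ^ n|)
      = ∫ t in (0:ℝ)..x, (Real.cos t ^ n - Real.cos x ^ n) := by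
    apply intervalIntegral.integral_congr
    intro t ht
    rw [Set.uIcc_of_le hx0] at ht
    obtain ⟨ht0, htx⟩ := ht
    have hcos : Real.cos x ≤ Real.cos t :=
      Real.cos_le_cos_of_nonneg_of_le_pi ht0 hxπ htx
    have h : Real.cos x ^ n ≤ Real.cos t ^ n := hmono hcos
    show |Real.cos x ^ n - Real.cos t ^ n| = Real.cos t ^ n - Real.cos x ^ n
    rw [abs_of_nonpos (by linarith), neg_sub]
  have h2 : (∫ t in x..π, |Real.cos x ^ n - Real.cos t ^ n|)
      = ∫ t in x..π, (Real.cos x ^ n - Real.cos t ^ n) := by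
    apply intervalIntegral.integral_congr
    intro t ht
    rw [Set.uIcc_of_le hxπ] at ht
    obtain ⟨htx, htπ⟩ := ht
    have hcos : Real.cos t ≤ Real.cos x :=
      Real.cos_le_cos_of_nonneg_of_le_pi hx0 htπ htx
    have h : Real.cos t ^ n ≤ Real.cos x ^ n := hmono hcos
    show |Real.cos x ^ n - Real.cos t ^ n| = Real.cos x ^ n - Real.cos t ^ n
    rw [abs_of_nonneg (by linarith)]
  have hv1 : (∫ t in (0:ℝ)..x, (Real.cos t ^ n - Real.cos x ^ n))
      = (∫ t in (0:ℝ)..x, Real.cos t ^ n) - x * Real.cos x ^ n := by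
    rw [intervalIntegral.integral_sub (hintf 0 x) intervalIntegrable_const,
      intervalIntegral.integral_const, smul_eq_mul, sub_zero]
  have hv2 : (∫ t in x..π, (Real.cos x ^ n - Real.cos t ^ n))
      = (π - x) * Real.cos x ^ n - ∫ t in x..π, Real.cos t ^ n := by
    rw [intervalIntegral.integral_sub intervalIntegrable_const (hintf x π),
      intervalIntegral.integral_const, smul_eq_mul]
  have hS0 : (∑ j ∈ Finset.range ((n - 1) / 2 + 1),
      (n.choose j : ℝ) / 2 ^ (n - 1) * (Real.sin (((n - 2 * j : ℕ) : ℝ) * 0) / ((n - 2 * j : ℕ) : ℝ))) = 0 := by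
    apply Finset.sum_eq_zero
    intro j _
    rw [mul_zero, Real.sin_zero, zero_div, mul_zero]
  have hSπ : (∑ j ∈ Finset.range ((n - 1) / 2 + 1),
      (n.choose j : ℝ) / 2 ^ (n - 1) * (Real.sin (((n - 2 * j : ℕ) : ℝ) * π) / ((n - 2 * j : ℕ) : ℝ))) = 0 := by
    apply Finset.sum_eq_zero
    intro j _
    rw [Real.sin_nat_mul_pi, zero_div, mul_zero]
  rw [hsplit, h1, h2, hv1, hv2, aux_int_f n hn 0 x, aux_int_f n hn x π, hS0, hSπ]
  ring

lemma aux_value (n : ℕ) (hn : Odd n) :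
    (1 / π) * (∫ x in (0:ℝ)..π, (∫ t in (0:ℝ)..π, |Real.cos x ^ n - Real.cos t ^ n|))
      = 8 / (2 ^ (n - 1) * π) * ∑ j ∈ Finset.range ((n - 1) / 2 + 1),
          (n.choose j : ℝ) / ((n : ℝ) - 2 * (j : ℝ)) ^ 2 := by
  have hπ : (0:ℝ) < π := Real.pi_pos
  set r : ℕ := (n - 1) / 2 + 1 with hr
  have hMne : ∀ j ∈ Finset.range r, ((n - 2 * j : ℕ) : ℝ) ≠ 0 := fun j hj => by
    have := (aux_M_facts n j hn (Finset.mem_range.mp hj)).1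
    positivity
  have hcosMπ : ∀ j ∈ Finset.range r, Real.cos (((n - 2 * j : ℕ) : ℝ) * π) = -1 := by
    intro j hj
    have hodd := (aux_M_facts n j hn (Finset.mem_range.mp hj)).2.1
    have := Real.cos_nat_mul_pi_sub 0 (n - 2 * j)
    rw [sub_zero, Real.cos_zero, mul_one] at this
    rw [this, hodd.neg_one_pow]
  -- step 1 : replace G by closed form
  have hGH : (∫ x in (0:ℝ)..π, (∫ t in (0:ℝ)..π, |Real.cos x ^ n - Real.cos t ^ n|))
      = ∫ x in (0:ℝ)..π, (2 * (∑ j ∈ Finset.range r,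
          (n.choose j : ℝ) / 2 ^ (n - 1) * (Real.sin (((n - 2 * j : ℕ) : ℝ) * x) / ((n - 2 * j : ℕ) : ℝ)))
        + (π - 2 * x) * Real.cos x ^ n) := by
    apply intervalIntegral.integral_congr
    intro x hx
    rw [Set.uIcc_of_le hπ.le] at hx
    exact aux_G_closed n hn x hx
  -- integrability of the pieces
  have hcontS : Continuous (fun x => (∑ j ∈ Finset.range r,
      (n.choose j : ℝ) / 2 ^ (n - 1) * (Real.sin (((n - 2 * j : ℕ) : ℝ) * x) / ((n - 2 * j : ℕ) : ℝ)))) := by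
    apply continuous_finset_sum
    intro j _
    exact continuous_const.mul
      ((Real.continuous_sin.comp (continuous_const.mul continuous_id)).div_const _)
  have hcontW : Continuous (fun x => (π - 2 * x) * Real.cos x ^ n) :=
    (continuous_const.sub (continuous_const.mul continuous_id)).mul (Real.continuous_cos.pow n)
  have hsplit : (∫ x in (0:ℝ)..π, (2 * (∑ j ∈ Finset.range r,
        (n.choose j : ℝ) / 2 ^ (n - 1) * (Real.sin (((n - 2 * j : ℕ) : ℝ) * x) / ((n - 2 * j : ℕ) : ℝ)))
        + (π - 2 * x) * Real.cos x ^ n))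
      = 2 * (∫ x in (0:ℝ)..π, (∑ j ∈ Finset.range r,
          (n.choose j : ℝ) / 2 ^ (n - 1) * (Real.sin (((n - 2 * j : ℕ) : ℝ) * x) / ((n - 2 * j : ℕ) : ℝ))))
        + ∫ x in (0:ℝ)..π, (π - 2 * x) * Real.cos x ^ n := by
    rw [intervalIntegral.integral_add ((continuous_const.fun_mul hcontS).intervalIntegrable _ _)
      (hcontW.intervalIntegrable _ _), intervalIntegral.integral_const_mul]
  -- value of the S integral
  have hvS : (∫ x in (0:ℝ)..π, (∑ j ∈ Finset.range r,
      (n.choose j : ℝ) / 2 ^ (n - 1) * (Real.sin (((n - 2 * j : ℕ) : ℝ) * x) / ((n - 2 * j : ℕ) : ℝ))))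
      = ∑ j ∈ Finset.range r, (n.choose j : ℝ) / 2 ^ (n - 1) * (2 / ((n - 2 * j : ℕ) : ℝ) ^ 2) := by
    have hintT : ∀ j ∈ Finset.range r, IntervalIntegrable (fun x =>
        (n.choose j : ℝ) / 2 ^ (n - 1) * (Real.sin (((n - 2 * j : ℕ) : ℝ) * x) / ((n - 2 * j : ℕ) : ℝ)))
        volume 0 π := by
      intro j _
      apply Continuous.intervalIntegrable
      fun_prop
    rw [intervalIntegral.integral_finset_sum hintT]
    refine Finset.sum_congr rfl fun j hj => ?_
    have hM := hMne j hj
    have hint : (∫ x in (0:ℝ)..π,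
        (n.choose j : ℝ) / 2 ^ (n - 1) * (Real.sin (((n - 2 * j : ℕ) : ℝ) * x) / ((n - 2 * j : ℕ) : ℝ)))
        = ((n.choose j : ℝ) / 2 ^ (n - 1) * (-Real.cos (((n - 2 * j : ℕ) : ℝ) * π) / ((n - 2 * j : ℕ) : ℝ) ^ 2))
          - ((n.choose j : ℝ) / 2 ^ (n - 1) * (-Real.cos (((n - 2 * j : ℕ) : ℝ) * 0) / ((n - 2 * j : ℕ) : ℝ) ^ 2)) := by
      apply intervalIntegral.integral_eq_sub_of_hasDerivAt
        (fun x _ => (aux_hd_cos _ hM x).const_mul _)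
      exact (continuous_const.mul ((Real.continuous_sin.comp
        (continuous_const.mul continuous_id)).div_const _)).intervalIntegrable _ _
    rw [hint, hcosMπ j hj, mul_zero, Real.cos_zero]
    field_simp
    ring
  -- value of the weighted integral
  have hfM : ∀ x : ℝ, Real.cos x ^ n = ∑ j ∈ Finset.range r,
      (n.choose j : ℝ) / 2 ^ (n - 1) * Real.cos (((n - 2 * j : ℕ) : ℝ) * x) := by
    intro x
    rw [aux_cos_pow_eq n hn x]
    exact Finset.sum_congr rfl fun j hj =>
      by rw [(aux_M_facts n j hn (Finset.mem_range.mp hj)).2.2]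
  have hvW : (∫ x in (0:ℝ)..π, (π - 2 * x) * Real.cos x ^ n)
      = ∑ j ∈ Finset.range r, (n.choose j : ℝ) / 2 ^ (n - 1) * (4 / ((n - 2 * j : ℕ) : ℝ) ^ 2) := by
    have hcongr : (∫ x in (0:ℝ)..π, (π - 2 * x) * Real.cos x ^ n)
        = ∫ x in (0:ℝ)..π, (∑ j ∈ Finset.range r,
            (n.choose j : ℝ) / 2 ^ (n - 1) * ((π - 2 * x) * Real.cos (((n - 2 * j : ℕ) : ℝ) * x))) := by
      apply intervalIntegral.integral_congr
      intro x _
      show (π - 2 * x) * Real.cos x ^ n = _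
      rw [hfM x, Finset.mul_sum]
      exact Finset.sum_congr rfl fun j hj => by ring
    have hintT : ∀ j ∈ Finset.range r, IntervalIntegrable (fun x =>
        (n.choose j : ℝ) / 2 ^ (n - 1) * ((π - 2 * x) * Real.cos (((n - 2 * j : ℕ) : ℝ) * x)))
        volume 0 π := by
      intro j _
      apply Continuous.intervalIntegrable
      fun_prop
    rw [hcongr, intervalIntegral.integral_finset_sum hintT]
    refine Finset.sum_congr rfl fun j hj => ?_
    have hM := hMne j hj
    set M : ℝ := ((n - 2 * j : ℕ) : ℝ) with hMdef
    have hint : (∫ x in (0:ℝ)..π, (n.choose j : ℝ) / 2 ^ (n - 1) * ((π - 2 * x) * Real.cos (M * x)))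
        = ((n.choose j : ℝ) / 2 ^ (n - 1) * ((π - 2 * π) * Real.sin (M * π) / M - 2 * Real.cos (M * π) / M ^ 2))
          - ((n.choose j : ℝ) / 2 ^ (n - 1) * ((π - 2 * 0) * Real.sin (M * 0) / M - 2 * Real.cos (M * 0) / M ^ 2)) := by
      apply intervalIntegral.integral_eq_sub_of_hasDerivAt
        (fun x _ => (aux_hd_mix M hM x).const_mul _)
      exact (continuous_const.mul
        ((continuous_const.sub (continuous_const.mul continuous_id)).mul
          (Real.continuous_cos.comp (continuous_const.mul continuous_id)))).intervalIntegrable _ _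
    rw [hint, hcosMπ j hj]
    have hsinMπ : Real.sin (M * π) = 0 := Real.sin_nat_mul_pi _
    rw [hsinMπ]
    simp only [mul_zero, Real.sin_zero, Real.cos_zero]
    field_simp
    ring
  -- combine
  rw [hGH, hsplit, hvS, hvW, Finset.mul_sum, ← Finset.sum_add_distrib, Finset.mul_sum,
    Finset.mul_sum]
  refine Finset.sum_congr rfl fun j hj => ?_
  have hM := hMne j hj
  have hcast := (aux_M_facts n j hn (Finset.mem_range.mp hj)).2.2
  rw [← hcast]
  have h2 : (2:ℝ) ^ (n - 1) ≠ 0 := by positivity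
  field_simp
  ring


theorem area_odd_power (n : ℕ) (hn : Odd n) (hpos : 0 < n) :
    Tendsto (fun k : ℕ => ∫ x in (0:ℝ)..π, |Real.cos x ^ n - Real.cos (k * x) ^ n|)
      atTop
      (𝓝 (8 / (2 ^ (n - 1) * π) *
        ∑ j ∈ Finset.range ((n - 1) / 2 + 1),
          (n.choose j : ℝ) / ((n : ℝ) - 2 * (j : ℝ)) ^ 2)) := by
  rw [← aux_value n hn]
  exact aux_tendsto n hn
end

section
/- Let n be a positive integer with n ≡ 2 (mod 4). Then the limit A_n = lim_{k→∞} ∫₀^π |cosⁿ x − cosⁿ(kx)| dx (k ranging over the positive integers) exists and equals (16/(2ⁿ·π)) · Σ_{j=0}^{(n−2)/4} C(n,2j)/(n/2 − 2j)², where C(n,m) denotes the binomial coefficient. -/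
open Real Filter MeasureTheory Topology intervalIntegral

namespace AreaAux

noncomputable def f (n : ℕ) (x : ℝ) : ℝ := Real.cos x ^ n

lemma continuous_f (n : ℕ) : Continuous (f n) := Real.continuous_cos.pow n

lemma lip_f (n : ℕ) (x y : ℝ) : |f n x - f n y| ≤ n * |x - y| := by
  have hlip : LipschitzWith n (f n) := by
    apply lipschitzWith_of_nnnorm_deriv_le (Real.differentiable_cos.pow n)
    intro x
    have hd : deriv (f n) x = n * Real.cos x ^ (n - 1) * (-Real.sin x) := by
      unfold f
      rw [deriv_fun_pow (Real.differentiable_cos.differentiableAt) _, Real.deriv_cos]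
    have h1 : ‖deriv (f n) x‖ ≤ (n : ℝ) := by
      rw [hd, Real.norm_eq_abs, abs_mul, abs_mul, abs_neg, abs_pow]
      calc |(n:ℝ)| * |Real.cos x| ^ (n-1) * |Real.sin x|
          ≤ (n:ℝ) * 1 ^ (n-1) * 1 := by
            apply mul_le_mul
            · apply mul_le_mul
              · simp
              · exact pow_le_pow_left₀ (abs_nonneg _) (Real.abs_cos_le_one x) _
              · positivity
              · positivity
            · exact Real.abs_sin_le_one x
            · positivity
            · positivity
        _ = (n : ℝ) := by ring
    have h2 : (‖deriv (f n) x‖₊ : ℝ) ≤ ((n : NNReal) : ℝ) := by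
      rw [coe_nnnorm]; push_cast; exact h1
    exact_mod_cast h2
  have := hlip.dist_le_mul x y
  simpa [Real.dist_eq] using this

lemma periodic_f {n : ℕ} (hn : Even n) : Function.Periodic (f n) π := by
  intro x
  simp [f, Real.cos_add_pi, hn.neg_pow]

lemma f_reflect {n : ℕ} (hn : Even n) (x : ℝ) : f n (π - x) = f n x := by
  simp [f, Real.cos_pi_sub, hn.neg_pow]

noncomputable def G (n : ℕ) (x : ℝ) : ℝ := ∫ t in (0:ℝ)..π, |f n x - f n t|

lemma integrable_abs_sub (n : ℕ) (x a b : ℝ) :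
    IntervalIntegrable (fun t => |f n x - f n t|) volume a b :=
  ((continuous_const.sub (continuous_f n)).abs).intervalIntegrable a b

lemma G_lip (n : ℕ) (x y : ℝ) : |G n x - G n y| ≤ (π * n) * |x - y| := by
  have h : G n x - G n y = ∫ t in (0:ℝ)..π, (|f n x - f n t| - |f n y - f n t|) :=
    (intervalIntegral.integral_sub (integrable_abs_sub n x 0 π) (integrable_abs_sub n y 0 π)).symm
  rw [h]
  have hb : ∀ t ∈ Set.uIoc (0:ℝ) π, ‖|f n x - f n t| - |f n y - f n t|‖ ≤ n * |x - y| := by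
    intro t _
    rw [Real.norm_eq_abs]
    refine le_trans (abs_abs_sub_abs_le_abs_sub _ _) ?_
    have he : (f n x - f n t) - (f n y - f n t) = f n x - f n y := by ring
    rw [he]; exact lip_f n x y
  have := intervalIntegral.norm_integral_le_of_norm_le_const hb
  rw [Real.norm_eq_abs] at this
  calc |∫ t in (0:ℝ)..π, (|f n x - f n t| - |f n y - f n t|)| ≤ (n * |x-y|) * |π - 0| := this
    _ = (π * n) * |x - y| := by rw [sub_zero, abs_of_nonneg Real.pi_nonneg]; ring

lemma continuous_G (n : ℕ) : Continuous (G n) := by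
  have : LipschitzWith (Real.toNNReal (π * n)) (G n) := by
    apply LipschitzWith.of_dist_le_mul
    intro x y
    rw [Real.dist_eq, Real.dist_eq, Real.coe_toNNReal _ (by positivity)]
    exact G_lip n x y
  exact this.continuous

lemma integrable_G (n : ℕ) (a b : ℝ) : IntervalIntegrable (G n) volume a b :=
  (continuous_G n).intervalIntegrable a b


lemma fk_cont (n k : ℕ) : Continuous (fun x : ℝ => |f n x - f n ((k:ℝ)*x)|) :=
  ((continuous_f n).sub ((continuous_f n).comp (continuous_const.mul continuous_id))).abs

lemma shift_cont (n : ℕ) (c d : ℝ) : Continuous (fun x : ℝ => |f n ((c+x)/d) - f n x|) :=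
  (((continuous_f n).comp ((continuous_const.add continuous_id).div_const _)).sub
    (continuous_f n)).abs

lemma piece_eq {n : ℕ} (hn : Even n) (k : ℕ) (hk : 0 < k) (i : ℕ) :
    ∫ x in ((i:ℝ)*π/k)..(((i:ℝ)+1)*π/k), |f n x - f n ((k:ℝ)*x)| =
      (1/k) * ∫ x in (0:ℝ)..π, |f n (((i:ℝ)*π+x)/k) - f n x| := by
  have hk0 : (k:ℝ) ≠ 0 := Nat.cast_ne_zero.mpr hk.ne'
  have A := intervalIntegral.integral_comp_div (a := (i:ℝ)*π) (b := ((i:ℝ)+1)*π)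
      (f := fun y => |f n y - f n ((k:ℝ)*y)|) hk0
  rw [smul_eq_mul] at A
  have A' : ∫ x in ((i:ℝ)*π)..(((i:ℝ)+1)*π), |f n (x/k) - f n x|
      = (k:ℝ) * ∫ x in ((i:ℝ)*π/k)..(((i:ℝ)+1)*π/k), |f n x - f n ((k:ℝ)*x)| := by
    rw [← A]
    apply intervalIntegral.integral_congr
    intro x _
    simp only
    rw [mul_comm (k:ℝ) (x/k), div_mul_cancel₀ x hk0]
  have hper : ∀ x : ℝ, f n ((i:ℝ)*π + x) = f n x := by
    intro x
    have h := (periodic_f hn).nat_mul i x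
    rw [add_comm]; exact h
  have B2 : ∫ x in (0:ℝ)..π, |f n (((i:ℝ)*π+x)/k) - f n ((i:ℝ)*π+x)|
      = ∫ x in ((i:ℝ)*π + 0)..((i:ℝ)*π + π), |f n (x/k) - f n x| :=
    intervalIntegral.integral_comp_add_left (fun y => |f n (y/k) - f n y|) ((i:ℝ)*π)
  rw [show (i:ℝ)*π + 0 = (i:ℝ)*π by ring, show (i:ℝ)*π + π = ((i:ℝ)+1)*π by ring] at B2
  have B' : ∫ x in (0:ℝ)..π, |f n (((i:ℝ)*π+x)/k) - f n x|
      = ∫ x in ((i:ℝ)*π)..(((i:ℝ)+1)*π), |f n (x/k) - f n x| := by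
    rw [← B2]
    apply intervalIntegral.integral_congr
    intro x _
    simp only [hper]
  rw [B', A']
  field_simp

lemma abs_piece_sub (n : ℕ) (k : ℕ) (hk : 0 < k) (i : ℕ) :
    |(1/(k:ℝ)) * (∫ x in (0:ℝ)..π, |f n (((i:ℝ)*π+x)/k) - f n x|)
       - (1/π) * ∫ x in ((i:ℝ)*π/k)..(((i:ℝ)+1)*π/k), G n x| ≤ 2*n*π^2/k^2 := by
  have hk0 : (0:ℝ) < k := Nat.cast_pos.mpr hk
  have hπ : (0:ℝ) < π := Real.pi_pos
  set a₀ : ℝ := (i:ℝ)*π/k with ha₀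
  set a₁ : ℝ := ((i:ℝ)+1)*π/k with ha₁
  have hstep : a₁ - a₀ = π/k := by rw [ha₀, ha₁]; field_simp; ring
  have hle : a₀ ≤ a₁ := by
    rw [ha₀, ha₁]
    apply div_le_div_of_nonneg_right _ hk0.le
    nlinarith
  have est1 : |(1/(k:ℝ)) * (∫ x in (0:ℝ)..π, |f n (((i:ℝ)*π+x)/k) - f n x|)
      - (1/(k:ℝ)) * G n a₀| ≤ n*π^2/k^2 := by
    have hsub : (∫ x in (0:ℝ)..π, |f n (((i:ℝ)*π+x)/k) - f n x|) - G n a₀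
        = ∫ x in (0:ℝ)..π, (|f n (((i:ℝ)*π+x)/k) - f n x| - |f n a₀ - f n x|) := by
      rw [intervalIntegral.integral_sub ((shift_cont n ((i:ℝ)*π) k).intervalIntegrable 0 π)
        (integrable_abs_sub n a₀ 0 π)]
      rfl
    have hb : ∀ x ∈ Set.uIoc (0:ℝ) π,
        ‖|f n (((i:ℝ)*π+x)/k) - f n x| - |f n a₀ - f n x|‖ ≤ n * (π/k) := by
      intro x hx
      rw [Set.uIoc_of_le hπ.le] at hx
      rw [Real.norm_eq_abs]
      refine le_trans (abs_abs_sub_abs_le_abs_sub _ _) ?_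
      have he : (f n (((i:ℝ)*π+x)/k) - f n x) - (f n a₀ - f n x)
          = f n (((i:ℝ)*π+x)/k) - f n a₀ := by ring
      rw [he]
      refine le_trans (lip_f n _ _) ?_
      have hd : ((i:ℝ)*π+x)/k - a₀ = x/k := by rw [ha₀]; field_simp; ring
      rw [hd, abs_of_nonneg (div_nonneg hx.1.le hk0.le)]
      exact mul_le_mul_of_nonneg_left (div_le_div_of_nonneg_right hx.2 hk0.le) (Nat.cast_nonneg n)
    have hnn := intervalIntegral.norm_integral_le_of_norm_le_const hb
    rw [Real.norm_eq_abs] at hnn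
    rw [← mul_sub, abs_mul, abs_of_nonneg (by positivity : (0:ℝ) ≤ 1/(k:ℝ)), hsub]
    calc (1/(k:ℝ)) * |∫ x in (0:ℝ)..π, (|f n (((i:ℝ)*π+x)/k) - f n x| - |f n a₀ - f n x|)|
        ≤ (1/(k:ℝ)) * ((n * (π/k)) * |π - 0|) :=
          mul_le_mul_of_nonneg_left hnn (by positivity)
      _ = n*π^2/k^2 := by rw [sub_zero, abs_of_nonneg hπ.le]; field_simp
  have est2 : |(1/(k:ℝ)) * G n a₀ - (1/π) * ∫ x in a₀..a₁, G n x| ≤ n*π^2/k^2 := by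
    have hconst : (1/(k:ℝ)) * G n a₀ = (1/π) * ∫ x in a₀..a₁, (fun _ => G n a₀) x := by
      rw [intervalIntegral.integral_const, hstep, smul_eq_mul]
      field_simp
    rw [hconst, ← mul_sub, abs_mul, abs_of_nonneg (by positivity : (0:ℝ) ≤ 1/π)]
    have hsub : (∫ x in a₀..a₁, (fun _ => G n a₀) x) - ∫ x in a₀..a₁, G n x
        = ∫ x in a₀..a₁, (G n a₀ - G n x) := by
      rw [intervalIntegral.integral_sub intervalIntegrable_const (integrable_G n a₀ a₁)]
    rw [hsub]
    have hb : ∀ x ∈ Set.uIoc a₀ a₁, ‖G n a₀ - G n x‖ ≤ (π * n) * (π/k) := by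
      intro x hx
      rw [Set.uIoc_of_le hle] at hx
      rw [Real.norm_eq_abs]
      refine le_trans (G_lip n a₀ x) ?_
      apply mul_le_mul_of_nonneg_left _ (by positivity)
      rw [abs_of_nonpos (by linarith [hx.1.le] : a₀ - x ≤ 0)]
      have h2 := hx.2
      rw [← hstep]; linarith
    have hnn := intervalIntegral.norm_integral_le_of_norm_le_const hb
    rw [Real.norm_eq_abs] at hnn
    calc (1/π) * |∫ x in a₀..a₁, (G n a₀ - G n x)|
        ≤ (1/π) * (((π * n) * (π/k)) * |a₁ - a₀|) :=
          mul_le_mul_of_nonneg_left hnn (by positivity)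
      _ = n*π^2/k^2 := by
          rw [hstep, abs_of_nonneg (by positivity : (0:ℝ) ≤ π/k)]
          field_simp
  calc |(1/(k:ℝ)) * (∫ x in (0:ℝ)..π, |f n (((i:ℝ)*π+x)/k) - f n x|)
       - (1/π) * ∫ x in a₀..a₁, G n x|
      ≤ |(1/(k:ℝ)) * (∫ x in (0:ℝ)..π, |f n (((i:ℝ)*π+x)/k) - f n x|) - (1/(k:ℝ)) * G n a₀|
        + |(1/(k:ℝ)) * G n a₀ - (1/π) * ∫ x in a₀..a₁, G n x| := abs_sub_le _ _ _
    _ ≤ n*π^2/k^2 + n*π^2/k^2 := add_le_add est1 est2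
    _ = 2*n*π^2/k^2 := by ring


lemma main_est {n : ℕ} (hn : Even n) (k : ℕ) (hk : 0 < k) :
    |(∫ x in (0:ℝ)..π, |f n x - f n ((k:ℝ)*x)|) - (1/π) * ∫ x in (0:ℝ)..π, G n x|
      ≤ 2*n*π^2/k := by
  have hk0 : (k:ℝ) ≠ 0 := Nat.cast_ne_zero.mpr hk.ne'
  set a : ℕ → ℝ := fun i => (i:ℝ)*π/k with ha
  have h0 : a 0 = 0 := by simp [ha]
  have hkk : a k = π := by rw [ha]; field_simp
  have hI : ∫ x in (0:ℝ)..π, |f n x - f n ((k:ℝ)*x)|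
      = ∑ i ∈ Finset.range k, ∫ x in a i..a (i+1), |f n x - f n ((k:ℝ)*x)| := by
    rw [intervalIntegral.sum_integral_adjacent_intervals
      (fun i _ => (fk_cont n k).intervalIntegrable _ _), h0, hkk]
  have hG : ∫ x in (0:ℝ)..π, G n x
      = ∑ i ∈ Finset.range k, ∫ x in a i..a (i+1), G n x := by
    rw [intervalIntegral.sum_integral_adjacent_intervals
      (fun i _ => integrable_G n _ _), h0, hkk]
  rw [hI, hG, Finset.mul_sum, ← Finset.sum_sub_distrib]
  have key : ∀ i ∈ Finset.range k,
      |(∫ x in a i..a (i+1), |f n x - f n ((k:ℝ)*x)|) - (1/π) * ∫ x in a i..a (i+1), G n x|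
        ≤ 2*n*π^2/k^2 := by
    intro i _
    have hcast : a (i+1) = ((i:ℝ)+1)*π/k := by rw [ha]; push_cast; ring_nf
    rw [show a i = (i:ℝ)*π/k from rfl, hcast, piece_eq hn k hk i]
    exact abs_piece_sub n k hk i
  calc |∑ i ∈ Finset.range k,
        ((∫ x in a i..a (i+1), |f n x - f n ((k:ℝ)*x)|) - (1/π) * ∫ x in a i..a (i+1), G n x)|
      ≤ ∑ i ∈ Finset.range k, |(∫ x in a i..a (i+1), |f n x - f n ((k:ℝ)*x)|)
          - (1/π) * ∫ x in a i..a (i+1), G n x| := Finset.abs_sum_le_sum_abs _ _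
    _ ≤ ∑ _i ∈ Finset.range k, 2*n*π^2/k^2 := Finset.sum_le_sum key
    _ = k * (2*n*π^2/k^2) := by rw [Finset.sum_const, Finset.card_range, nsmul_eq_mul]
    _ = 2*n*π^2/k := by field_simp

lemma tendsto_main {n : ℕ} (hn : Even n) :
    Tendsto (fun k : ℕ => ∫ x in (0:ℝ)..π, |f n x - f n ((k:ℝ)*x)|) atTop
      (𝓝 ((1/π) * ∫ x in (0:ℝ)..π, G n x)) := by
  rw [← tendsto_sub_nhds_zero_iff]
  apply squeeze_zero_norm' (a := fun k : ℕ => 2*n*π^2/k)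
  · filter_upwards [eventually_ge_atTop 1] with k hk
    rw [Real.norm_eq_abs]
    exact main_est hn k hk
  · exact tendsto_const_div_atTop_nhds_zero_nat _


lemma cos_pow_eq (n : ℕ) (x : ℝ) :
    Real.cos x ^ n
      = (∑ j ∈ Finset.range (n+1), (n.choose j : ℝ) * Real.cos ((2*(j:ℝ) - n) * x)) / 2^n := by
  have h : (((2*Real.cos x)^n : ℝ) : ℂ)
      = ∑ j ∈ Finset.range (n+1),
          (((n.choose j : ℝ)) : ℂ) * Complex.exp ((((2*(j:ℝ) - n) * x : ℝ)) * Complex.I) := by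
    rw [Complex.ofReal_pow, Complex.ofReal_mul, Complex.ofReal_ofNat, Complex.ofReal_cos,
      Complex.two_cos, add_pow]
    apply Finset.sum_congr rfl
    intro j hj
    have hjn : j ≤ n := Nat.lt_succ_iff.mp (Finset.mem_range.mp hj)
    rw [← Complex.exp_nat_mul, ← Complex.exp_nat_mul, ← Complex.exp_add, mul_comm]
    congr 2
    push_cast [Nat.cast_sub hjn]
    ring
  have h2 := congrArg Complex.re h
  rw [Complex.ofReal_re, Complex.re_sum] at h2
  simp only [Complex.re_ofReal_mul, Complex.exp_ofReal_mul_I_re] at h2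
  rw [eq_div_iff (by positivity : (2:ℝ)^n ≠ 0)]
  rw [← h2, mul_pow]
  ring

lemma int_cos (c : ℝ) (hc : c ≠ 0) (b : ℝ) :
    ∫ x in (0:ℝ)..b, Real.cos (c*x) = Real.sin (c*b)/c := by
  rw [intervalIntegral.integral_comp_mul_left (fun y => Real.cos y) hc]
  simp [integral_cos, smul_eq_mul]
  ring

lemma int_x_cos (c : ℝ) (hc : c ≠ 0) :
    ∫ x in (0:ℝ)..(π/2), x * Real.cos (c*x)
      = (π/(2*c)) * Real.sin (c*(π/2)) + Real.cos (c*(π/2))/c^2 - 1/c^2 := by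
  have hderiv : ∀ y ∈ Set.uIcc (0:ℝ) (π/2),
      HasDerivAt (fun y => y * Real.sin (c*y)/c + Real.cos (c*y)/c^2)
        (y * Real.cos (c*y)) y := by
    intro y _
    have h1 : HasDerivAt (fun t : ℝ => c*t) c y := by
      simpa using (hasDerivAt_id y).const_mul c
    have hsin : HasDerivAt (fun t : ℝ => Real.sin (c*t)) (Real.cos (c*y) * c) y :=
      (Real.hasDerivAt_sin (c*y)).comp y h1
    have hcos : HasDerivAt (fun t : ℝ => Real.cos (c*t)) (-Real.sin (c*y) * c) y :=
      (Real.hasDerivAt_cos (c*y)).comp y h1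
    have hmul : HasDerivAt (fun t : ℝ => t * Real.sin (c*t))
        (1 * Real.sin (c*y) + y * (Real.cos (c*y) * c)) y :=
      (hasDerivAt_id y).mul hsin
    have := (hmul.div_const c).add (hcos.div_const (c^2))
    refine this.congr_deriv ?_
    rw [div_add_div _ _ hc (pow_ne_zero 2 hc), div_eq_iff (mul_ne_zero hc (pow_ne_zero 2 hc))]
    ring
  rw [intervalIntegral.integral_eq_sub_of_hasDerivAt hderiv
    ((continuous_id.mul (Real.continuous_cos.comp (continuous_const.mul continuous_id))).intervalIntegrable _ _)]
  simp only [mul_zero, Real.sin_zero, Real.cos_zero, zero_mul, zero_div, zero_add]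
  field_simp


lemma sin_jm (j m : ℕ) : Real.sin (((j:ℝ) - m) * π) = 0 := by
  have h : ((j:ℝ) - m) = ((j - m : ℤ) : ℝ) := by push_cast; ring
  rw [h]; exact Real.sin_int_mul_pi _

lemma cos_jm (j m : ℕ) : Real.cos (((j:ℝ) - m) * π) = if Even (j + m) then 1 else -1 := by
  rcases le_or_gt m j with h | h
  · have hc : ((j:ℝ) - m) * π = ((j - m : ℕ) : ℝ) * π - 0 := by
      push_cast [h]; ring
    rw [hc, Real.cos_nat_mul_pi_sub, Real.cos_zero, mul_one]
    have hiff : Even (j - m) ↔ Even (j + m) := by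
      rw [Nat.even_sub h, Nat.even_add]
    rcases Nat.even_or_odd (j - m) with he | ho
    · rw [he.neg_one_pow, if_pos (hiff.mp he)]
    · rw [ho.neg_one_pow, if_neg]
      intro hc2; exact (Nat.not_even_iff_odd.mpr ho) (hiff.mpr hc2)
  · have hc : ((j:ℝ) - m) * π = -(((m - j : ℕ) : ℝ) * π - 0) := by
      push_cast [h.le]; ring
    rw [hc, Real.cos_neg, Real.cos_nat_mul_pi_sub, Real.cos_zero, mul_one]
    have hiff : Even (m - j) ↔ Even (j + m) := by
      rw [Nat.even_sub h.le, Nat.even_add]; tauto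
    rcases Nat.even_or_odd (m - j) with he | ho
    · rw [he.neg_one_pow, if_pos (hiff.mp he)]
    · rw [ho.neg_one_pow, if_neg]
      intro hc2; exact (Nat.not_even_iff_odd.mpr ho) (hiff.mpr hc2)

noncomputable def E (n m : ℕ) (j : ℕ) : ℝ :=
  if j = m then π^2/8 else (Real.cos (((j:ℝ) - m)*π) - 1)/(2*(j:ℝ) - n)^2

lemma intF (n m : ℕ) (hnm : n = 2*m) :
    ∫ x in (0:ℝ)..(π/2), Real.cos x ^ n = (π/2) * (n.choose m) / 2^n := by
  simp only [cos_pow_eq n]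
  rw [intervalIntegral.integral_div, intervalIntegral.integral_finset_sum
    (fun j _ => by apply Continuous.intervalIntegrable; fun_prop)]
  have hsum : ∑ j ∈ Finset.range (n+1),
      ∫ x in (0:ℝ)..(π/2), (n.choose j : ℝ) * Real.cos ((2*(j:ℝ) - n) * x)
      = (n.choose m : ℝ) * (π/2) := by
    rw [Finset.sum_eq_single m]
    · rw [intervalIntegral.integral_const_mul]
      have h0 : ∀ x : ℝ, Real.cos ((2*(m:ℝ) - n) * x) = 1 := by
        intro x
        rw [show (2*(m:ℝ) - n) = 0 by rw [hnm]; push_cast; ring]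
        simp
      simp only [h0]
      simp
    · intro j _ hj
      rw [intervalIntegral.integral_const_mul]
      have hc : (2*(j:ℝ) - n) ≠ 0 := by
        rw [hnm]; push_cast
        intro hcc
        apply hj
        have : (j:ℝ) = m := by linarith
        exact_mod_cast this
      rw [int_cos _ hc]
      rw [show (2*(j:ℝ) - n) * (π/2) = ((j:ℝ) - m) * π by rw [hnm]; push_cast; ring]
      rw [sin_jm]
      simp
    · intro hm
      exfalso; apply hm
      rw [Finset.mem_range, hnm]; omega
  rw [hsum]
  ring

lemma intJ (n m : ℕ) (hnm : n = 2*m) :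
    ∫ x in (0:ℝ)..(π/2), x * Real.cos x ^ n
      = (∑ j ∈ Finset.range (n+1), (n.choose j : ℝ) * E n m j) / 2^n := by
  have hrw : ∀ x : ℝ, x * Real.cos x ^ n
      = (∑ j ∈ Finset.range (n+1),
          (n.choose j : ℝ) * (x * Real.cos ((2*(j:ℝ) - n) * x))) / 2^n := by
    intro x
    rw [cos_pow_eq n, ← mul_div_assoc, Finset.mul_sum]
    congr 1
    apply Finset.sum_congr rfl
    intro j _
    ring
  simp only [hrw]
  rw [intervalIntegral.integral_div, intervalIntegral.integral_finset_sum
    (fun j _ => by apply Continuous.intervalIntegrable; fun_prop)]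
  congr 1
  apply Finset.sum_congr rfl
  intro j _
  rw [intervalIntegral.integral_const_mul]
  congr 1
  by_cases hj : j = m
  · subst hj
    have h0 : ∀ x : ℝ, x * Real.cos ((2*(j:ℝ) - n) * x) = x := by
      intro x
      rw [show (2*(j:ℝ) - n) = 0 by rw [hnm]; push_cast; ring]
      simp
    simp only [h0]
    rw [integral_id, E, if_pos rfl]
    ring
  · have hc : (2*(j:ℝ) - n) ≠ 0 := by
      rw [hnm]; push_cast
      intro hcc
      apply hj
      have : (j:ℝ) = m := by linarith
      exact_mod_cast this
    rw [int_x_cos _ hc, E, if_neg hj]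
    rw [show (2*(j:ℝ) - n) * (π/2) = ((j:ℝ) - m) * π by rw [hnm]; push_cast; ring]
    rw [sin_jm]
    field_simp
    ring


noncomputable def F (n : ℕ) (x : ℝ) : ℝ := ∫ t in (0:ℝ)..x, f n t

lemma hasDerivAt_F (n : ℕ) (x : ℝ) : HasDerivAt (F n) (f n x) x :=
  intervalIntegral.integral_hasDerivAt_right ((continuous_f n).intervalIntegrable 0 x)
    ((continuous_f n).aestronglyMeasurable.stronglyMeasurableAtFilter)
    (continuous_f n).continuousAt

lemma continuous_F (n : ℕ) : Continuous (F n) :=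
  continuous_iff_continuousAt.mpr fun x => (hasDerivAt_F n x).continuousAt

lemma f_anti (n : ℕ) {s t : ℝ} (hs : 0 ≤ s) (hst : s ≤ t) (ht : t ≤ π/2) :
    f n t ≤ f n s := by
  have h1 : Real.cos t ≤ Real.cos s :=
    Real.cos_le_cos_of_nonneg_of_le_pi hs (by linarith [Real.pi_pos]) hst
  have h2 : 0 ≤ Real.cos t := Real.cos_nonneg_of_mem_Icc ⟨by linarith [Real.pi_pos], ht⟩
  exact pow_le_pow_left₀ h2 h1 n

lemma G_reflect {n : ℕ} (hn : Even n) (x : ℝ) : G n (π - x) = G n x := by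
  unfold G
  simp only [f_reflect hn]

lemma half_double {n : ℕ} (hn : Even n) (g : ℝ → ℝ) (hg : ∀ x, g (π - x) = g x)
    (hgi : ∀ a b : ℝ, IntervalIntegrable g volume a b) :
    ∫ x in (0:ℝ)..π, g x = 2 * ∫ x in (0:ℝ)..(π/2), g x := by
  have hsplit : (∫ x in (0:ℝ)..(π/2), g x) + ∫ x in (π/2)..π, g x = ∫ x in (0:ℝ)..π, g x :=
    intervalIntegral.integral_add_adjacent_intervals (hgi _ _) (hgi _ _)
  have hrefl : ∫ x in (π/2)..π, g x = ∫ x in (0:ℝ)..(π/2), g x := by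
    have h1 : ∫ x in (0:ℝ)..(π/2), g (π - x) = ∫ x in (π - π/2)..(π - 0), g x :=
      intervalIntegral.integral_comp_sub_left g π
    rw [show π - π/2 = π/2 by ring, sub_zero] at h1
    rw [← h1]
    exact intervalIntegral.integral_congr (fun t _ => hg t)
  linarith

lemma G_eval {n : ℕ} (hn : Even n) {x : ℝ} (hx : x ∈ Set.Icc (0:ℝ) (π/2)) :
    G n x = 4*F n x - 2*F n (π/2) + (π - 4*x) * f n x := by
  obtain ⟨hx0, hx2⟩ := hx
  have hhalf : G n x = 2 * ∫ t in (0:ℝ)..(π/2), |f n x - f n t| := by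
    have hsplit : (∫ t in (0:ℝ)..(π/2), |f n x - f n t|) + ∫ t in (π/2)..π, |f n x - f n t|
        = G n x :=
      intervalIntegral.integral_add_adjacent_intervals
        (integrable_abs_sub n x _ _) (integrable_abs_sub n x _ _)
    have h1 : ∫ t in (0:ℝ)..(π/2), |f n x - f n (π - t)| = ∫ t in (π - π/2)..(π - 0), |f n x - f n t| :=
      intervalIntegral.integral_comp_sub_left (fun t => |f n x - f n t|) π
    rw [show π - π/2 = π/2 by ring, sub_zero] at h1
    have h2 : ∫ t in (π/2)..π, |f n x - f n t| = ∫ t in (0:ℝ)..(π/2), |f n x - f n t| := by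
      rw [← h1]
      apply intervalIntegral.integral_congr
      intro t _
      show |f n x - f n (π - t)| = |f n x - f n t|
      rw [f_reflect hn]
    linarith
  have hA : ∫ t in (0:ℝ)..x, |f n x - f n t| = F n x - x * f n x := by
    have hcg : ∫ t in (0:ℝ)..x, |f n x - f n t| = ∫ t in (0:ℝ)..x, (f n t - f n x) := by
      apply intervalIntegral.integral_congr
      intro t ht
      rw [Set.uIcc_of_le hx0] at ht
      have : f n x ≤ f n t := f_anti n ht.1 ht.2 hx2
      show |f n x - f n t| = f n t - f n x
      rw [abs_of_nonpos (by linarith), neg_sub]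
    rw [hcg, intervalIntegral.integral_sub ((continuous_f n).intervalIntegrable _ _)
      intervalIntegrable_const, intervalIntegral.integral_const, smul_eq_mul]
    unfold F
    ring
  have hFsplit : (∫ t in (0:ℝ)..x, f n t) + ∫ t in x..(π/2), f n t = ∫ t in (0:ℝ)..(π/2), f n t :=
    intervalIntegral.integral_add_adjacent_intervals
      ((continuous_f n).intervalIntegrable _ _) ((continuous_f n).intervalIntegrable _ _)
  have hB : ∫ t in x..(π/2), |f n x - f n t| = (π/2 - x) * f n x - (F n (π/2) - F n x) := by
    have hcg : ∫ t in x..(π/2), |f n x - f n t| = ∫ t in x..(π/2), (f n x - f n t) := by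
      apply intervalIntegral.integral_congr
      intro t ht
      rw [Set.uIcc_of_le hx2] at ht
      have : f n t ≤ f n x := f_anti n hx0 ht.1 ht.2
      show |f n x - f n t| = f n x - f n t
      rw [abs_of_nonneg (by linarith)]
    rw [hcg, intervalIntegral.integral_sub intervalIntegrable_const
      ((continuous_f n).intervalIntegrable _ _), intervalIntegral.integral_const, smul_eq_mul]
    have : ∫ t in x..(π/2), f n t = F n (π/2) - F n x := by
      unfold F; linarith
    rw [this]
  have hsplit2 : (∫ t in (0:ℝ)..x, |f n x - f n t|) + ∫ t in x..(π/2), |f n x - f n t|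
      = ∫ t in (0:ℝ)..(π/2), |f n x - f n t| :=
    intervalIntegral.integral_add_adjacent_intervals
      (integrable_abs_sub n x _ _) (integrable_abs_sub n x _ _)
  rw [hhalf, ← hsplit2, hA, hB]
  ring

lemma int_G {n : ℕ} (hn : Even n) :
    ∫ x in (0:ℝ)..π, G n x
      = 4*π*F n (π/2) - 16 * ∫ x in (0:ℝ)..(π/2), x * f n x := by
  rw [half_double hn (G n) (G_reflect hn) (integrable_G n)]
  have hcong : ∫ x in (0:ℝ)..(π/2), G n x
      = ∫ x in (0:ℝ)..(π/2), (4*F n x - 2*F n (π/2) + (π - 4*x) * f n x) := by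
    apply intervalIntegral.integral_congr
    intro x hx
    rw [Set.uIcc_of_le (by positivity : (0:ℝ) ≤ π/2)] at hx
    exact G_eval hn hx
  have hiF : IntervalIntegrable (fun x => 4*F n x) volume 0 (π/2) :=
    (continuous_const.mul (continuous_F n)).intervalIntegrable _ _
  have hic : IntervalIntegrable (fun _ : ℝ => 2*F n (π/2)) volume 0 (π/2) :=
    intervalIntegrable_const
  have hixf : IntervalIntegrable (fun x => (π - 4*x) * f n x) volume 0 (π/2) :=
    ((continuous_const.sub (continuous_const.mul continuous_id)).mul
      (continuous_f n)).intervalIntegrable _ _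
  have hxf : IntervalIntegrable (fun x => x * f n x) volume 0 (π/2) :=
    (continuous_id'.mul (continuous_f n)).intervalIntegrable _ _
  rw [hcong, intervalIntegral.integral_add (hiF.sub hic) hixf,
    intervalIntegral.integral_sub hiF hic]
  have e1 : ∫ x in (0:ℝ)..(π/2), 4*F n x = 4 * ∫ x in (0:ℝ)..(π/2), F n x :=
    intervalIntegral.integral_const_mul _ _
  have e2 : ∫ x in (0:ℝ)..(π/2), (fun _ : ℝ => 2*F n (π/2)) x = (π/2) * (2*F n (π/2)) := by
    rw [intervalIntegral.integral_const, smul_eq_mul, sub_zero]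
  have e3 : ∫ x in (0:ℝ)..(π/2), (π - 4*x) * f n x
      = π * F n (π/2) - 4 * ∫ x in (0:ℝ)..(π/2), x * f n x := by
    have : ∀ x : ℝ, (π - 4*x) * f n x = π * f n x - 4 * (x * f n x) := by intro x; ring
    simp only [this]
    rw [intervalIntegral.integral_sub (f := fun x => π * f n x) (g := fun x => 4 * (x * f n x)) ((continuous_const.mul (continuous_f n)).intervalIntegrable _ _)
      ((continuous_const.mul (continuous_id'.mul (continuous_f n))).intervalIntegrable _ _)]
    rw [intervalIntegral.integral_const_mul, intervalIntegral.integral_const_mul]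
    rfl
  have e4 : ∫ x in (0:ℝ)..(π/2), F n x
      = F n (π/2) * (π/2) - ∫ x in (0:ℝ)..(π/2), f n x * x := by
    have hparts := intervalIntegral.integral_mul_deriv_eq_deriv_mul
      (a := (0:ℝ)) (b := π/2)
      (u := F n) (v := fun x : ℝ => x) (u' := f n) (v' := fun _ => (1:ℝ))
      (fun x _ => hasDerivAt_F n x) (fun x _ => hasDerivAt_id x)
      ((continuous_f n).intervalIntegrable _ _) (continuous_const.intervalIntegrable _ _)
    simp only [mul_one] at hparts
    rw [hparts]
    have hF0 : F n 0 = 0 := intervalIntegral.integral_same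
    rw [hF0]
    ring
  rw [e1, e2, e3, e4]
  have e5 : ∫ x in (0:ℝ)..(π/2), f n x * x = ∫ x in (0:ℝ)..(π/2), x * f n x := by
    apply intervalIntegral.integral_congr
    intro x _
    ring
  rw [e5]
  ring


noncomputable def D (n m : ℕ) (j : ℕ) : ℝ :=
  if j = m then 0 else (Real.cos (((j:ℝ) - m)*π) - 1)/(2*(j:ℝ) - n)^2

lemma sum_CD (n m q : ℕ) (hnm : n = 2*m) (hm : m = 2*q+1) :
    ∑ j ∈ Finset.range (n+1), (n.choose j : ℝ) * D n m j
      = - ∑ i ∈ Finset.range (q+1), (n.choose (2*i) : ℝ) / ((m:ℝ) - 2*(i:ℝ))^2 := by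
  have h1 : ∑ j ∈ Finset.range (n+1), (n.choose j:ℝ) * D n m j
      = ∑ j ∈ (Finset.range (n+1)).filter (fun j => Even j), (n.choose j:ℝ) * D n m j := by
    rw [Finset.sum_filter_of_ne]
    intro j _ hne
    by_contra hodd
    apply hne
    by_cases hjm : j = m
    · simp [D, hjm]
    · have heven : Even (j + m) := by
        rw [Nat.even_iff]
        have hj1 : j % 2 = 1 := Nat.odd_iff.mp (Nat.not_even_iff_odd.mp hodd)
        omega
      rw [D, if_neg hjm, cos_jm, if_pos heven]
      simp
  have himg : (Finset.range (n+1)).filter (fun j => Even j)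
      = (Finset.range (m+1)).image (fun i => 2*i) := by
    ext j
    simp only [Finset.mem_filter, Finset.mem_range, Finset.mem_image]
    constructor
    · rintro ⟨hjr, r, hr⟩
      exact ⟨r, by omega, by omega⟩
    · rintro ⟨i, hi, rfl⟩
      exact ⟨by omega, i, by omega⟩
  have h2 : ∑ j ∈ (Finset.range (n+1)).filter (fun j => Even j), (n.choose j:ℝ) * D n m j
      = ∑ i ∈ Finset.range (m+1), (n.choose (2*i):ℝ) * D n m (2*i) := by
    rw [himg, Finset.sum_image (fun a _ b _ h => by omega)]
  have hDval : ∀ i ∈ Finset.range (m+1), (n.choose (2*i):ℝ) * D n m (2*i)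
      = -((n.choose (2*i):ℝ) / (2*((m:ℝ) - 2*(i:ℝ))^2)) := by
    intro i hi
    rw [Finset.mem_range] at hi
    have hne : 2*i ≠ m := by omega
    have hnotE : ¬ Even (2*i + m) := by
      rw [Nat.even_iff]; omega
    rw [D, if_neg hne, cos_jm, if_neg hnotE]
    have hmne : (m:ℝ) - 2*(i:ℝ) ≠ 0 := by
      intro hc
      have : (m:ℝ) = 2*(i:ℝ) := by linarith
      have : m = 2*i := by exact_mod_cast this
      omega
    have hd : (2*((2*i:ℕ):ℝ) - n) = 2*(2*(i:ℝ) - m) := by rw [hnm]; push_cast; ring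
    rw [hd]
    have hkey : ((-1:ℝ) - 1)/(2*(2*(i:ℝ) - (m:ℝ)))^2 = -(1/(2*((m:ℝ) - 2*(i:ℝ))^2)) := by
      have hsq : (2*(2*(i:ℝ) - (m:ℝ)))^2 = 4*((m:ℝ) - 2*(i:ℝ))^2 := by ring
      rw [hsq]
      rw [div_eq_iff (by positivity : (4:ℝ)*((m:ℝ) - 2*(i:ℝ))^2 ≠ 0)]
      field_simp [hmne]
      ring
    rw [hkey]
    ring
  rw [h1, h2, Finset.sum_congr rfl hDval]
  have hsplit : ∑ i ∈ Finset.range (m+1), -((n.choose (2*i):ℝ) / (2*((m:ℝ) - 2*(i:ℝ))^2))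
      = (∑ i ∈ Finset.range (q+1), -((n.choose (2*i):ℝ) / (2*((m:ℝ) - 2*(i:ℝ))^2)))
        + ∑ i ∈ Finset.Ico (q+1) (m+1), -((n.choose (2*i):ℝ) / (2*((m:ℝ) - 2*(i:ℝ))^2)) := by
    rw [Finset.range_eq_Ico,
      ← Finset.sum_Ico_consecutive (fun i => -((n.choose (2*i):ℝ) / (2*((m:ℝ) - 2*(i:ℝ))^2)))
        (by omega : 0 ≤ q+1) (by omega : q+1 ≤ m+1), Finset.range_eq_Ico]
  have hrefl : ∑ i ∈ Finset.Ico (q+1) (m+1), -((n.choose (2*i):ℝ) / (2*((m:ℝ) - 2*(i:ℝ))^2))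
      = ∑ i ∈ Finset.range (q+1), -((n.choose (2*i):ℝ) / (2*((m:ℝ) - 2*(i:ℝ))^2)) := by
    apply Finset.sum_nbij' (i := fun a => m - a) (j := fun a => m - a)
    · intro a ha
      rw [Finset.mem_Ico] at ha
      rw [Finset.mem_range]
      omega
    · intro a ha
      rw [Finset.mem_range] at ha
      rw [Finset.mem_Ico]
      omega
    · intro a ha
      rw [Finset.mem_Ico] at ha
      omega
    · intro a ha
      rw [Finset.mem_range] at ha
      omega
    · intro a ha
      rw [Finset.mem_Ico] at ha
      have hma : ((m - a : ℕ):ℝ) = (m:ℝ) - (a:ℝ) := by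
        have : a ≤ m := by omega
        push_cast [this]
        ring
      have hch : n.choose (2*(m-a)) = n.choose (2*a) := by
        rw [show 2*(m-a) = n - 2*a by omega, Nat.choose_symm (by omega)]
      rw [hch, hma]
      have hdd : ((m:ℝ) - 2*((m:ℝ) - (a:ℝ)))^2 = ((m:ℝ) - 2*(a:ℝ))^2 := by ring
      rw [hdd]
  rw [hsplit, hrefl, ← Finset.sum_add_distrib, ← Finset.sum_neg_distrib]
  apply Finset.sum_congr rfl
  intro i hi
  rw [Finset.mem_range] at hi
  have hmne : (m:ℝ) - 2*(i:ℝ) ≠ 0 := by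
    intro hc
    have ha : (m:ℝ) = 2*(i:ℝ) := by linarith
    have hb : m = 2*i := by exact_mod_cast ha
    omega
  field_simp [hmne]
  ring

end AreaAux

theorem area_even_power_two_mod_four (n : ℕ) (hpos : 0 < n) (hmod : n % 4 = 2) :
    Tendsto (fun k : ℕ => ∫ x in (0:ℝ)..π, |Real.cos x ^ n - Real.cos (k * x) ^ n|)
      atTop
      (𝓝 (16 / (2 ^ n * π) *
        ∑ j ∈ Finset.range ((n - 2) / 4 + 1),
          (n.choose (2 * j) : ℝ) / ((n : ℝ) / 2 - 2 * (j : ℝ)) ^ 2)) := by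
  obtain ⟨q, hq⟩ : ∃ q, n = 4*q+2 := ⟨n/4, by omega⟩
  set m := 2*q+1 with hmdef
  have hnm : n = 2*m := by omega
  have hEven : Even n := ⟨m, by omega⟩
  have hπ : π ≠ 0 := Real.pi_ne_zero
  have hval : (1/π) * ∫ x in (0:ℝ)..π, AreaAux.G n x
      = 16 / (2^n * π) * ∑ j ∈ Finset.range ((n-2)/4+1),
          (n.choose (2*j) : ℝ) / ((n:ℝ)/2 - 2*(j:ℝ))^2 := by
    rw [AreaAux.int_G hEven]
    have hF : AreaAux.F n (π/2) = (π/2) * (n.choose m) / 2^n := by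
      show (∫ t in (0:ℝ)..(π/2), AreaAux.f n t) = _
      simp only [AreaAux.f]
      exact AreaAux.intF n m hnm
    have hJ : (∫ x in (0:ℝ)..(π/2), x * AreaAux.f n x)
        = (∑ j ∈ Finset.range (n+1), (n.choose j : ℝ) * AreaAux.E n m j) / 2^n := by
      simp only [AreaAux.f]
      exact AreaAux.intJ n m hnm
    rw [hF, hJ]
    have hED : ∑ j ∈ Finset.range (n+1), (n.choose j : ℝ) * AreaAux.E n m j
        = (n.choose m : ℝ) * (π^2/8)
          + ∑ j ∈ Finset.range (n+1), (n.choose j : ℝ) * AreaAux.D n m j := by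
      have hpt : ∀ j ∈ Finset.range (n+1), (n.choose j : ℝ) * AreaAux.E n m j
          = (if j = m then (n.choose m : ℝ) * (π^2/8) else 0)
            + (n.choose j : ℝ) * AreaAux.D n m j := by
        intro j _
        by_cases hj : j = m
        · subst hj; simp [AreaAux.E, AreaAux.D]
        · simp [AreaAux.E, AreaAux.D, hj]
      rw [Finset.sum_congr rfl hpt, Finset.sum_add_distrib]
      have hite := Finset.sum_ite_eq' (Finset.range (n+1)) m
        (fun _ => (n.choose m : ℝ) * (π^2/8))
      rw [hite, if_pos (by rw [Finset.mem_range]; omega)]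
    rw [hED, AreaAux.sum_CD n m q hnm rfl]
    have hq4 : (n-2)/4 = q := by omega
    rw [hq4]
    have hhalf : ∀ j : ℕ, ((n:ℝ)/2 - 2*(j:ℝ))^2 = ((m:ℝ) - 2*(j:ℝ))^2 := by
      intro j
      rw [hnm]; push_cast; ring
    simp only [hhalf]
    have h2n : (2:ℝ)^n ≠ 0 := by positivity
    field_simp
    ring
  have hT := AreaAux.tendsto_main (n := n) hEven
  rw [hval] at hT
  simpa [AreaAux.f] using hT
end
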